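/- arXiv:1311.7466 — 5 statements merged into one kernel-verified Lean document; each statement's English description precedes it below -/
import Mathlib

section
/- For an ω-dimensional linear network code on a single-source acyclic network G=(V,E), the following two conditions are equivalent: (1) for every nonempty collection ξ⊆E of channels with |ξ|=min{ω, C_ξ}, the global encoding kernels f_e, e∈ξ, are linearly independent; (2) for every nonempty collection ξ'⊆E of channels, dim(span{f_e : e∈ξ'}) = min{ω, C_{ξ'}}. -/
open scoped BigOperators

/-- A single-source finite acyclic directed multigraph with unit-capacity channels.
Acyclicity is witnessed by a rank function compatible with channel adjacency, and the
source node `s` has no incoming channels. -/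
structure Network (V : Type*) (E : Type*) where
  tail : E → V
  head : E → V
  s : V
  no_in_source : ∀ e, head e ≠ s
  rk : E → ℕ
  acyclic : ∀ d e, head d = tail e → rk d < rk e

namespace Network

variable {V : Type*} {E : Type*}

/-- `p` is a nonempty directed path (a list of channels matching head-to-tail). -/
def IsPath (N : Network V E) (p : List E) : Prop :=
  p ≠ [] ∧ p.Chain' fun d e => N.head d = N.tail e

/-- `p` is a nonempty directed path starting at node `u`. -/
def PathFrom (N : Network V E) (p : List E) (u : V) : Prop :=
  N.IsPath p ∧ ∀ e ∈ p.head?, N.tail e = u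

variable [Fintype V] [Fintype E] [DecidableEq V] [DecidableEq E]

/-- `C` is a cut between the source and the collection `T` of nodes: after removing the
channels of `C` no directed path from the source reaches a node of `T`. -/
def IsCutNodes (N : Network V E) (C : Finset E) (T : Finset V) : Prop :=
  ∀ p : List E, N.PathFrom p N.s → (∃ e ∈ p.getLast?, N.head e ∈ T) → ∃ e ∈ p, e ∈ C

/-- The minimum cut capacity between the source and a collection `T` of nodes. -/
noncomputable def minCutNodes (N : Network V E) (T : Finset V) : ℕ :=
  sInf {n | ∃ C : Finset E, N.IsCutNodes C T ∧ C.card = n}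

/-- The minimum cut capacity `C_t` between the source and a node `t`. -/
noncomputable def minCutNode (N : Network V E) (t : V) : ℕ :=
  N.minCutNodes {t}

/-- `C` is a cut between the source and a collection `ξ` of channels (equivalently, a
cut between the source and the new nodes `n_e`, `e ∈ ξ`, in the network obtained by
subdividing every channel of `ξ`): every path from the source whose last channel lies
in `ξ` must meet `C`. -/
def IsCutChans (N : Network V E) (C : Finset E) (ξ : Finset E) : Prop :=
  ∀ p : List E, N.PathFrom p N.s → (∃ e ∈ p.getLast?, e ∈ ξ) → ∃ e ∈ p, e ∈ C

/-- The minimum cut capacity `C_ξ` between the source and a collection `ξ` of channels. -/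
noncomputable def minCutChans (N : Network V E) (ξ : Finset E) : ℕ :=
  sInf {n | ∃ C : Finset E, N.IsCutChans C ξ ∧ C.card = n}

end Network

section Codes

variable {V E : Type*} [Fintype V] [Fintype E] [DecidableEq V] [DecidableEq E]
variable (F : Type*) [Field F]

/-- `f` is the family of global encoding kernels of the `ω`-dimensional linear network
code with local encoding coefficients `k` (between adjacent real channels) and `ks`
(from the `ω` imaginary message channels at the source): the kernels of the imaginary
message channels form the standard basis of `F^ω` and
`f_e = ∑_{d ∈ In(tail e)} k_{d,e} • f_d`. -/
def IsGlobalKernel (N : Network V E) (ω : ℕ) (k : E → E → F) (ks : Fin ω → E → F)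
    (f : E → Fin ω → F) : Prop :=
  ∀ e, f e = (∑ d : E, if N.head d = N.tail e then k d e • f d else 0)
    + ∑ i : Fin ω, (if N.tail e = N.s then ks i e else 0) • (Pi.single i 1 : Fin ω → F)

/-- `f` is the family of extended global encoding kernels (coordinates indexed by
`Fin ω ⊕ E`, i.e. by `In(s) ∪ E`) of the `ω`-dimensional linear network
error-correction code with local encoding coefficients `k`, `ks`:
`f̃_e = ∑_{d ∈ In(tail e)} k_{d,e} • f̃_d + 1_e`. -/
def IsExtKernel (N : Network V E) (ω : ℕ) (k : E → E → F) (ks : Fin ω → E → F)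
    (f : E → (Fin ω ⊕ E) → F) : Prop :=
  ∀ e, f e = (∑ d : E, if N.head d = N.tail e then k d e • f d else 0)
    + (∑ i : Fin ω, (if N.tail e = N.s then ks i e else 0) • (Pi.single (Sum.inl i) 1 : (Fin ω ⊕ E) → F))
    + (Pi.single (Sum.inr e) 1 : (Fin ω ⊕ E) → F)

variable {ω : ℕ}

/-- The row of the decoding matrix `F̃_T` of a collection `T` of nodes indexed by
`d ∈ In(s) ∪ E` (extended by zero outside the coordinates `In(T)`). -/
def rowT (N : Network V E) (f : E → (Fin ω ⊕ E) → F) (T : Finset V)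
    (d : Fin ω ⊕ E) : E → F :=
  fun e => if N.head e ∈ T then f e d else 0

/-- The message space `Φ(T)` of a collection `T` of nodes. -/
def PhiT (N : Network V E) (f : E → (Fin ω ⊕ E) → F) (T : Finset V) :
    Submodule F (E → F) :=
  Submodule.span F (Set.range fun i : Fin ω => rowT F N f T (Sum.inl i))

/-- The error space `Δ(T, ρ)` of an error pattern `ρ` with respect to `T`. -/
def DeltaT (N : Network V E) (f : E → (Fin ω ⊕ E) → F) (T : Finset V)
    (ρ : Finset E) : Submodule F (E → F) :=
  Submodule.span F ((fun e => rowT F N f T (Sum.inr e)) '' (ρ : Set E))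

/-- The minimum distance `d_min^{(T)}` at a collection `T` of nodes. -/
noncomputable def dminT (N : Network V E) (f : E → (Fin ω ⊕ E) → F) (T : Finset V) : ℕ :=
  sInf {n | ∃ ρ : Finset E, ρ.card = n ∧ DeltaT F N f T ρ ⊓ PhiT F N f T ≠ ⊥}

/-- `ρ₁ ≺_T ρ₂` : `Δ(T,ρ₁) ⊆ Δ(T,ρ₂)` for every `ω`-dimensional `F`-valued LNEC code
on the network. -/
def DominatesT (N : Network V E) (ω : ℕ) (T : Finset V) (ρ₁ ρ₂ : Finset E) : Prop :=
  ∀ (k : E → E → F) (ks : Fin ω → E → F) (f : E → (Fin ω ⊕ E) → F),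
    IsExtKernel F N ω k ks f → DeltaT F N f T ρ₁ ≤ DeltaT F N f T ρ₂

/-- `rank_T(ρ)`, the rank of an error pattern with respect to `T`. -/
noncomputable def rankT (N : Network V E) (ω : ℕ) (T : Finset V) (ρ : Finset E) : ℕ :=
  sInf {n | ∃ ρ' : Finset E, DominatesT F N ω T ρ ρ' ∧ ρ'.card = n}

/-- The row of the decoding matrix `F̃_ξ` of a collection `ξ` of channels indexed by
`d ∈ In(s) ∪ E` (extended by zero outside the coordinates `ξ`). -/
def rowX (N : Network V E) (f : E → (Fin ω ⊕ E) → F) (ξ : Finset E)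
    (d : Fin ω ⊕ E) : E → F :=
  fun e => if e ∈ ξ then f e d else 0

/-- The message space `Φ(ξ)` of a collection `ξ` of channels. -/
def PhiX (N : Network V E) (f : E → (Fin ω ⊕ E) → F) (ξ : Finset E) :
    Submodule F (E → F) :=
  Submodule.span F (Set.range fun i : Fin ω => rowX F N f ξ (Sum.inl i))

/-- The error space `Δ(ξ, ρ)` of an error pattern `ρ` with respect to `ξ`. -/
def DeltaX (N : Network V E) (f : E → (Fin ω ⊕ E) → F) (ξ : Finset E)
    (ρ : Finset E) : Submodule F (E → F) :=
  Submodule.span F ((fun e => rowX F N f ξ (Sum.inr e)) '' (ρ : Set E))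

/-- The minimum distance `d_min^{(ξ)}` at a collection `ξ` of channels. -/
noncomputable def dminX (N : Network V E) (f : E → (Fin ω ⊕ E) → F) (ξ : Finset E) : ℕ :=
  sInf {n | ∃ ρ : Finset E, ρ.card = n ∧ DeltaX F N f ξ ρ ⊓ PhiX F N f ξ ≠ ⊥}

/-- `ρ₁ ≺_ξ ρ₂` : `Δ(ξ,ρ₁) ⊆ Δ(ξ,ρ₂)` for every `ω`-dimensional `F`-valued LNEC code
on the network. -/
def DominatesX (N : Network V E) (ω : ℕ) (ξ : Finset E) (ρ₁ ρ₂ : Finset E) : Prop :=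
  ∀ (k : E → E → F) (ks : Fin ω → E → F) (f : E → (Fin ω ⊕ E) → F),
    IsExtKernel F N ω k ks f → DeltaX F N f ξ ρ₁ ≤ DeltaX F N f ξ ρ₂

/-- `rank_ξ(ρ)`, the rank of an error pattern with respect to `ξ`. -/
noncomputable def rankX (N : Network V E) (ω : ℕ) (ξ : Finset E) (ρ : Finset E) : ℕ :=
  sInf {n | ∃ ρ' : Finset E, DominatesX F N ω ξ ρ ρ' ∧ ρ'.card = n}

/-- Regular LNEC code: `dim Φ(t) = ω` for every non-source node with `C_t ≥ ω`. -/
def Regular (N : Network V E) (f : E → (Fin ω ⊕ E) → F) : Prop :=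
  ∀ t : V, t ≠ N.s → ω ≤ N.minCutNode t →
    Module.finrank F (PhiT F N f ({t} : Finset V)) = ω

/-- Strongly regular LNEC code: `dim Φ(t) = min{ω, C_t}` for every non-source node. -/
def StronglyRegular (N : Network V E) (f : E → (Fin ω ⊕ E) → F) : Prop :=
  ∀ t : V, t ≠ N.s →
    Module.finrank F (PhiT F N f ({t} : Finset V)) = min ω (N.minCutNode t)

/-- Strongly sup-regular LNEC code: `dim Φ(T) = min{ω, C_T}` for every nonempty
collection of non-source nodes. -/
def StronglySupRegular (N : Network V E) (f : E → (Fin ω ⊕ E) → F) : Prop :=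
  ∀ T : Finset V, T.Nonempty → N.s ∉ T →
    Module.finrank F (PhiT F N f T) = min ω (N.minCutNodes T)

/-- Channel-regular LNEC code: `dim Φ(ξ) = min{ω, C_ξ}` for every nonempty collection
of channels. -/
def ChannelRegular (N : Network V E) (f : E → (Fin ω ⊕ E) → F) : Prop :=
  ∀ ξ : Finset E, ξ.Nonempty →
    Module.finrank F (PhiX F N f ξ) = min ω (N.minCutChans ξ)

/-- LNEC multicast MDS code. -/
def IsMulticastMDS (N : Network V E) (f : E → (Fin ω ⊕ E) → F) : Prop :=
  Regular F N f ∧ ∀ t : V, t ≠ N.s → ω ≤ N.minCutNode t →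
    dminT F N f {t} = N.minCutNode t - ω + 1

/-- LNEC broadcast MDS code. -/
def IsBroadcastMDS (N : Network V E) (f : E → (Fin ω ⊕ E) → F) : Prop :=
  StronglyRegular F N f ∧ ∀ t : V, t ≠ N.s →
    (ω ≤ N.minCutNode t → dminT F N f {t} = N.minCutNode t - ω + 1) ∧
    (N.minCutNode t < ω → dminT F N f {t} = 1)

/-- LNEC dispersion MDS code. -/
def IsDispersionMDS (N : Network V E) (f : E → (Fin ω ⊕ E) → F) : Prop :=
  StronglySupRegular F N f ∧ ∀ T : Finset V, T.Nonempty → N.s ∉ T →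
    (ω ≤ N.minCutNodes T → dminT F N f T = N.minCutNodes T - ω + 1) ∧
    (N.minCutNodes T < ω → dminT F N f T = 1)

/-- LNEC generic MDS code. -/
def IsGenericMDS (N : Network V E) (f : E → (Fin ω ⊕ E) → F) : Prop :=
  ChannelRegular F N f ∧ ∀ ξ : Finset E, ξ.Nonempty →
    (ω ≤ N.minCutChans ξ → dminX F N f ξ = N.minCutChans ξ - ω + 1) ∧
    (N.minCutChans ξ < ω → dminX F N f ξ = 1)

/-- `R_t(δ_t)`: the set of error patterns `ρ` with `|ρ| = rank_t(ρ) = δ_t`. -/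
def Rset (N : Network V E) (ω : ℕ) (t : V) : Set (Finset E) :=
  {ρ | ρ.card = N.minCutNode t - ω ∧ rankT F N ω ({t} : Finset V) ρ = N.minCutNode t - ω}

end Codes

section AuxStatement0

variable {V E : Type*} [Fintype V] [Fintype E] [DecidableEq V] [DecidableEq E]

private lemma mem_of_getLast?' {α : Type*} {l : List α} {a : α} (h : a ∈ l.getLast?) : a ∈ l := by
  obtain ⟨h', rfl⟩ := List.mem_getLast?_eq_getLast h
  exact List.getLast_mem h'

/-- The boundary of a set `A` of channels: channels outside `A` whose tail is the source
or is reachable as head of a channel of `A`. -/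
noncomputable def bdryE (N : Network V E) (A : Finset E) : Finset E := by
  classical
  exact Finset.univ.filter (fun e => e ∉ A ∧ (N.tail e = N.s ∨ ∃ d ∈ A, N.head d = N.tail e))

lemma mem_bdryE {N : Network V E} {A : Finset E} {e : E} :
    e ∈ bdryE N A ↔ e ∉ A ∧ (N.tail e = N.s ∨ ∃ d ∈ A, N.head d = N.tail e) := by
  classical
  simp [bdryE]

private lemma path_meets_bdry (N : Network V E) (A ξ : Finset E) (hA : ∀ e ∈ A, e ∉ ξ) :
    ∀ p : List E, p ≠ [] → p.Chain' (fun d e => N.head d = N.tail e) →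
    (∀ e ∈ p.head?, N.tail e = N.s ∨ ∃ d ∈ A, N.head d = N.tail e) →
    (∃ e ∈ p.getLast?, e ∈ ξ) → ∃ e ∈ p, e ∈ bdryE N A := by
  intro p
  induction p with
  | nil => intro h; exact absurd rfl h
  | cons a rest ih =>
    intro _ hchain hhead hlast
    by_cases haA : a ∈ A
    · match rest, hchain, hlast with
      | [], _, hlast =>
        obtain ⟨e, he, heξ⟩ := hlast
        simp only [List.getLast?_singleton, Option.mem_some_iff] at he
        subst he
        exact absurd heξ (hA a haA)
      | b :: rest', hchain, hlast =>
        have hchain' : (b :: rest').Chain' (fun d e => N.head d = N.tail e) := hchain.tail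
        have hab : N.head a = N.tail b := (List.isChain_cons_cons.mp hchain).1
        have hlast' : ∃ e ∈ (b :: rest').getLast?, e ∈ ξ := by
          rwa [List.getLast?_cons_cons] at hlast
        obtain ⟨e, he1, he2⟩ := ih (List.cons_ne_nil _ _) hchain'
          (by intro e he; simp only [List.head?_cons, Option.mem_some_iff] at he; subst he
              exact Or.inr ⟨a, haA, hab⟩) hlast'
        exact ⟨e, List.mem_cons_of_mem _ he1, he2⟩
    · refine ⟨a, List.mem_cons_self, mem_bdryE.mpr ⟨haA, ?_⟩⟩
      exact hhead a (by simp)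

lemma isCutChans_bdryE (N : Network V E) (A ξ : Finset E) (hA : ∀ e ∈ A, e ∉ ξ) :
    N.IsCutChans (bdryE N A) ξ := by
  intro p hp hlast
  exact path_meets_bdry N A ξ hA p hp.1.1 hp.1.2 (fun e he => Or.inl (hp.2 e he)) hlast

/-- The set of channels reachable from the source by a path avoiding `C`. -/
noncomputable def reachE (N : Network V E) (C : Finset E) : Finset E := by
  classical
  exact Finset.univ.filter
    (fun e => ∃ p : List E, N.PathFrom p N.s ∧ p.getLast? = some e ∧ ∀ d ∈ p, d ∉ C)

lemma mem_reachE {N : Network V E} {C : Finset E} {e : E} :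
    e ∈ reachE N C ↔ ∃ p : List E, N.PathFrom p N.s ∧ p.getLast? = some e ∧ ∀ d ∈ p, d ∉ C := by
  classical
  simp [reachE]

lemma reachE_avoid {N : Network V E} {C ξ : Finset E} (hC : N.IsCutChans C ξ) :
    ∀ e ∈ reachE N C, e ∉ ξ := by
  intro e he heξ
  obtain ⟨p, hp, hlast, havoid⟩ := mem_reachE.mp he
  obtain ⟨d, hd, hdC⟩ := hC p hp ⟨e, by simp [hlast], heξ⟩
  exact havoid d hd hdC

lemma bdryE_reachE_subset {N : Network V E} {C ξ : Finset E} (hC : N.IsCutChans C ξ) :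
    bdryE N (reachE N C) ⊆ C := by
  intro e he
  obtain ⟨heR, hcase⟩ := mem_bdryE.mp he
  by_contra heC
  apply heR
  rcases hcase with hts | ⟨d, hdR, hde⟩
  · refine mem_reachE.mpr ⟨[e], ⟨⟨List.cons_ne_nil _ _, List.isChain_singleton _⟩, ?_⟩, rfl, ?_⟩
    · intro x hx; simp only [List.head?_cons, Option.mem_some_iff] at hx; subst hx; exact hts
    · intro d hd; simp only [List.mem_singleton] at hd; subst hd; exact heC
  · obtain ⟨p, ⟨⟨hpne, hpch⟩, hphead⟩, hplast, hpavoid⟩ := mem_reachE.mp hdR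
    refine mem_reachE.mpr ⟨p ++ [e], ⟨⟨by simp, ?_⟩, ?_⟩, ?_, ?_⟩
    · refine List.IsChain.append hpch (List.isChain_singleton _) ?_
      intro x hx y hy
      simp only [List.head?_cons, Option.mem_some_iff] at hy
      rw [hplast, Option.mem_some_iff] at hx
      subst hx; subst hy; exact hde
    · intro x hx
      rw [List.head?_append, Option.mem_def] at hx
      cases hhp : p.head? with
      | none => exact absurd (List.head?_eq_none_iff.mp hhp) hpne
      | some y =>
        rw [hhp] at hx
        simp only [Option.some_or, Option.some.injEq] at hx
        subst hx
        exact hphead y (by rw [hhp]; rfl)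
    · exact List.getLast?_concat
    · intro d hd
      rcases List.mem_append.mp hd with h | h
      · exact hpavoid d h
      · simp only [List.mem_singleton] at h; subst h; exact heC

lemma cutSet_nonempty (N : Network V E) (ξ : Finset E) :
    {n | ∃ C : Finset E, N.IsCutChans C ξ ∧ C.card = n}.Nonempty := by
  refine ⟨ξ.card, ξ, ?_, rfl⟩
  intro p _ hlast
  obtain ⟨e, he, heξ⟩ := hlast
  exact ⟨e, mem_of_getLast?' he, heξ⟩

lemma exists_minCut (N : Network V E) (ξ : Finset E) :
    ∃ C : Finset E, N.IsCutChans C ξ ∧ C.card = N.minCutChans ξ :=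
  Nat.sInf_mem (cutSet_nonempty N ξ)

lemma minCutChans_le_of_cut {N : Network V E} {C ξ : Finset E} (hC : N.IsCutChans C ξ) :
    N.minCutChans ξ ≤ C.card :=
  Nat.sInf_le ⟨C, hC, rfl⟩

lemma minCutChans_le_card (N : Network V E) (ξ : Finset E) :
    N.minCutChans ξ ≤ ξ.card := by
  refine minCutChans_le_of_cut ?_
  intro p _ hlast
  obtain ⟨e, he, heξ⟩ := hlast
  exact ⟨e, mem_of_getLast?' he, heξ⟩

lemma minCutChans_mono {N : Network V E} {ξ η : Finset E} (h : ξ ⊆ η) :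
    N.minCutChans ξ ≤ N.minCutChans η := by
  obtain ⟨C, hC, hcard⟩ := exists_minCut N η
  rw [← hcard]
  refine minCutChans_le_of_cut ?_
  intro p hp hlast
  obtain ⟨e, he, heξ⟩ := hlast
  exact hC p hp ⟨e, he, h heξ⟩

lemma minCutChans_insert_le (N : Network V E) (a : E) (ξ : Finset E) :
    N.minCutChans (insert a ξ) ≤ N.minCutChans ξ + 1 := by
  obtain ⟨C, hC, hcard⟩ := exists_minCut N ξ
  have hcut : N.IsCutChans (insert a C) (insert a ξ) := by
    intro p hp hlast
    obtain ⟨e, he, heξ⟩ := hlast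
    rcases Finset.mem_insert.mp heξ with rfl | heξ
    · exact ⟨e, mem_of_getLast?' he, Finset.mem_insert_self _ _⟩
    · obtain ⟨d, hd, hdC⟩ := hC p hp ⟨e, he, heξ⟩
      exact ⟨d, hd, Finset.mem_insert_of_mem hdC⟩
  calc N.minCutChans (insert a ξ) ≤ (insert a C).card := minCutChans_le_of_cut hcut
    _ ≤ C.card + 1 := Finset.card_insert_le _ _
    _ = N.minCutChans ξ + 1 := by rw [hcard]

lemma minCutChans_union_le (N : Network V E) (ξ S : Finset E) :
    N.minCutChans (ξ ∪ S) ≤ N.minCutChans ξ + S.card := by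
  induction S using Finset.induction_on with
  | empty => simpa using le_refl _
  | insert a S ha ih =>
    have h1 : ξ ∪ insert a S = insert a (ξ ∪ S) := by
      ext x; simp only [Finset.mem_insert, Finset.mem_union]; tauto
    rw [h1, Finset.card_insert_of_notMem ha]
    calc N.minCutChans (insert a (ξ ∪ S)) ≤ N.minCutChans (ξ ∪ S) + 1 :=
          minCutChans_insert_le N a _
      _ ≤ N.minCutChans ξ + S.card + 1 := by omega

private lemma bdryE_union_inter_subset (N : Network V E) (A B : Finset E) :
    bdryE N (A ∪ B) ∪ bdryE N (A ∩ B) ⊆ bdryE N A ∪ bdryE N B := by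
  intro e he
  rcases Finset.mem_union.mp he with he | he
  · obtain ⟨h1, h2⟩ := mem_bdryE.mp he
    have hA : e ∉ A := fun h => h1 (Finset.mem_union_left _ h)
    have hB : e ∉ B := fun h => h1 (Finset.mem_union_right _ h)
    rcases h2 with hs | ⟨d, hd, hde⟩
    · exact Finset.mem_union_left _ (mem_bdryE.mpr ⟨hA, Or.inl hs⟩)
    · rcases Finset.mem_union.mp hd with hd | hd
      · exact Finset.mem_union_left _ (mem_bdryE.mpr ⟨hA, Or.inr ⟨d, hd, hde⟩⟩)
      · exact Finset.mem_union_right _ (mem_bdryE.mpr ⟨hB, Or.inr ⟨d, hd, hde⟩⟩)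
  · obtain ⟨h1, h2⟩ := mem_bdryE.mp he
    have h2' : (N.tail e = N.s ∨ ∃ d ∈ A, N.head d = N.tail e) ∧
        (N.tail e = N.s ∨ ∃ d ∈ B, N.head d = N.tail e) := by
      rcases h2 with hs | ⟨d, hd, hde⟩
      · exact ⟨Or.inl hs, Or.inl hs⟩
      · obtain ⟨hdA, hdB⟩ := Finset.mem_inter.mp hd
        exact ⟨Or.inr ⟨d, hdA, hde⟩, Or.inr ⟨d, hdB, hde⟩⟩
    by_cases heA : e ∈ A
    · have heB : e ∉ B := fun h => h1 (Finset.mem_inter.mpr ⟨heA, h⟩)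
      exact Finset.mem_union_right _ (mem_bdryE.mpr ⟨heB, h2'.2⟩)
    · exact Finset.mem_union_left _ (mem_bdryE.mpr ⟨heA, h2'.1⟩)

private lemma bdryE_union_inter_inter_subset (N : Network V E) (A B : Finset E) :
    bdryE N (A ∪ B) ∩ bdryE N (A ∩ B) ⊆ bdryE N A ∩ bdryE N B := by
  intro e he
  obtain ⟨he1, he2⟩ := Finset.mem_inter.mp he
  obtain ⟨h1, _⟩ := mem_bdryE.mp he1
  obtain ⟨_, h4⟩ := mem_bdryE.mp he2
  have hA : e ∉ A := fun h => h1 (Finset.mem_union_left _ h)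
  have hB : e ∉ B := fun h => h1 (Finset.mem_union_right _ h)
  have h4' : (N.tail e = N.s ∨ ∃ d ∈ A, N.head d = N.tail e) ∧
      (N.tail e = N.s ∨ ∃ d ∈ B, N.head d = N.tail e) := by
    rcases h4 with hs | ⟨d, hd, hde⟩
    · exact ⟨Or.inl hs, Or.inl hs⟩
    · obtain ⟨hdA, hdB⟩ := Finset.mem_inter.mp hd
      exact ⟨Or.inr ⟨d, hdA, hde⟩, Or.inr ⟨d, hdB, hde⟩⟩
  exact Finset.mem_inter.mpr ⟨mem_bdryE.mpr ⟨hA, h4'.1⟩, mem_bdryE.mpr ⟨hB, h4'.2⟩⟩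

lemma minCutChans_submodular (N : Network V E) (ξ η : Finset E) :
    N.minCutChans (ξ ∪ η) + N.minCutChans (ξ ∩ η) ≤ N.minCutChans ξ + N.minCutChans η := by
  obtain ⟨C₁, hC₁, hc₁⟩ := exists_minCut N ξ
  obtain ⟨C₂, hC₂, hc₂⟩ := exists_minCut N η
  set A := reachE N C₁ with hAdef
  set B := reachE N C₂ with hBdef
  have hAξ : ∀ e ∈ A, e ∉ ξ := reachE_avoid hC₁
  have hBη : ∀ e ∈ B, e ∉ η := reachE_avoid hC₂
  have hbA : (bdryE N A).card ≤ N.minCutChans ξ := by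
    rw [← hc₁]; exact Finset.card_le_card (bdryE_reachE_subset hC₁)
  have hbB : (bdryE N B).card ≤ N.minCutChans η := by
    rw [← hc₂]; exact Finset.card_le_card (bdryE_reachE_subset hC₂)
  have h1 : N.minCutChans (ξ ∪ η) ≤ (bdryE N (A ∩ B)).card := by
    refine minCutChans_le_of_cut (isCutChans_bdryE N _ _ ?_)
    intro e he heξη
    obtain ⟨heA, heB⟩ := Finset.mem_inter.mp he
    rcases Finset.mem_union.mp heξη with h | h
    · exact hAξ e heA h
    · exact hBη e heB h
  have h2 : N.minCutChans (ξ ∩ η) ≤ (bdryE N (A ∪ B)).card := by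
    refine minCutChans_le_of_cut (isCutChans_bdryE N _ _ ?_)
    intro e he heξη
    obtain ⟨heξ, _⟩ := Finset.mem_inter.mp heξη
    rcases Finset.mem_union.mp he with h | h
    · exact hAξ e h heξ
    · exact hBη e h (Finset.mem_inter.mp heξη).2
  have key : (bdryE N (A ∪ B)).card + (bdryE N (A ∩ B)).card ≤
      (bdryE N A).card + (bdryE N B).card := by
    have e1 : (bdryE N (A ∪ B) ∪ bdryE N (A ∩ B)).card + (bdryE N (A ∪ B) ∩ bdryE N (A ∩ B)).card
        = (bdryE N (A ∪ B)).card + (bdryE N (A ∩ B)).card :=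
      Finset.card_union_add_card_inter _ _
    have e2 : (bdryE N A ∪ bdryE N B).card + (bdryE N A ∩ bdryE N B).card
        = (bdryE N A).card + (bdryE N B).card := Finset.card_union_add_card_inter _ _
    have le1 : (bdryE N (A ∪ B) ∪ bdryE N (A ∩ B)).card ≤ (bdryE N A ∪ bdryE N B).card :=
      Finset.card_le_card (bdryE_union_inter_subset N A B)
    have le2 : (bdryE N (A ∪ B) ∩ bdryE N (A ∩ B)).card ≤ (bdryE N A ∩ bdryE N B).card :=
      Finset.card_le_card (bdryE_union_inter_inter_subset N A B)
    omega
  omega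

lemma minCutChans_closure (N : Network V E) (B S : Finset E)
    (h : ∀ e ∈ S, N.minCutChans (insert e B) = N.minCutChans B) :
    N.minCutChans (B ∪ S) = N.minCutChans B := by
  induction S using Finset.induction_on with
  | empty => simp
  | insert a S ha ih =>
    have hS : N.minCutChans (B ∪ S) = N.minCutChans B :=
      ih (fun e he => h e (Finset.mem_insert_of_mem he))
    have haB : N.minCutChans (insert a B) = N.minCutChans B := h a (Finset.mem_insert_self _ _)
    by_cases haB' : a ∈ B
    · have : B ∪ insert a S = B ∪ S := by
        ext x; simp only [Finset.mem_union, Finset.mem_insert]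
        constructor
        · rintro (h | rfl | h); exacts [Or.inl h, Or.inl haB', Or.inr h]
        · rintro (h | h); exacts [Or.inl h, Or.inr (Or.inr h)]
      rw [this, hS]
    · have hunion : (B ∪ S) ∪ insert a B = insert a (B ∪ S) := by
        ext x; simp only [Finset.mem_union, Finset.mem_insert]; tauto
      have hinter : (B ∪ S) ∩ insert a B = B := by
        ext x
        simp only [Finset.mem_inter, Finset.mem_union, Finset.mem_insert]
        constructor
        · rintro ⟨h1, rfl | h2⟩
          · rcases h1 with h | h
            · exact h
            · exact absurd h ha
          · exact h2
        · intro h; exact ⟨Or.inl h, Or.inr h⟩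
      have hsub := minCutChans_submodular N (B ∪ S) (insert a B)
      rw [hunion, hinter] at hsub
      have hmono : N.minCutChans (B ∪ S) ≤ N.minCutChans (insert a (B ∪ S)) :=
        minCutChans_mono (Finset.subset_insert _ _)
      have h2 : B ∪ insert a S = insert a (B ∪ S) := by
        ext x; simp only [Finset.mem_union, Finset.mem_insert]; tauto
      rw [h2]
      omega

lemma exists_basis_minCut (N : Network V E) (A : Finset E) :
    ∃ B ⊆ A, N.minCutChans B = B.card ∧ N.minCutChans A = B.card := by
  classical
  set P := A.powerset.filter (fun B => N.minCutChans B = B.card) with hP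
  have hPne : P.Nonempty := by
    refine ⟨∅, Finset.mem_filter.mpr ⟨Finset.empty_mem_powerset _, ?_⟩⟩
    have := minCutChans_le_card N (∅ : Finset E)
    simpa using this
  obtain ⟨B, hBP, hBmax⟩ := Finset.exists_max_image P Finset.card hPne
  obtain ⟨hBA, hBind⟩ := Finset.mem_filter.mp hBP
  have hBA' : B ⊆ A := Finset.mem_powerset.mp hBA
  have hstep : ∀ e ∈ A \ B, N.minCutChans (insert e B) = N.minCutChans B := by
    intro e he
    obtain ⟨heA, heB⟩ := Finset.mem_sdiff.mp he
    have hlow : N.minCutChans B ≤ N.minCutChans (insert e B) :=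
      minCutChans_mono (Finset.subset_insert _ _)
    have hhigh : N.minCutChans (insert e B) ≤ N.minCutChans B + 1 :=
      minCutChans_insert_le N e B
    rcases Nat.lt_or_ge (N.minCutChans (insert e B)) (N.minCutChans B + 1) with h | h
    · omega
    · exfalso
      have heq : N.minCutChans (insert e B) = (insert e B).card := by
        rw [Finset.card_insert_of_notMem heB]; omega
      have hmem : insert e B ∈ P := Finset.mem_filter.mpr
        ⟨Finset.mem_powerset.mpr (Finset.insert_subset heA hBA'), heq⟩
      have := hBmax _ hmem
      rw [Finset.card_insert_of_notMem heB] at this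
      omega
  have hclose : N.minCutChans (B ∪ (A \ B)) = N.minCutChans B :=
    minCutChans_closure N B (A \ B) hstep
  rw [Finset.union_sdiff_of_subset hBA'] at hclose
  exact ⟨B, hBA', hBind, by rw [hclose, hBind]⟩

lemma minCutChans_of_subset_indep (N : Network V E) {B ξ : Finset E}
    (hB : N.minCutChans B = B.card) (hξ : ξ ⊆ B) : N.minCutChans ξ = ξ.card := by
  have h1 : B = ξ ∪ (B \ ξ) := by
    rw [Finset.union_sdiff_of_subset hξ]
  have h2 : N.minCutChans B ≤ N.minCutChans ξ + (B \ ξ).card := by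
    conv_lhs => rw [h1]
    exact minCutChans_union_le N ξ (B \ ξ)
  have h3 : (B \ ξ).card + ξ.card = B.card := Finset.card_sdiff_add_card_eq_card hξ
  have h4 : N.minCutChans ξ ≤ ξ.card := minCutChans_le_card N ξ
  omega

lemma exists_indep_subset_minCut (N : Network V E) (A : Finset E) {m : ℕ}
    (hm : m ≤ N.minCutChans A) :
    ∃ ξ ⊆ A, ξ.card = m ∧ N.minCutChans ξ = m := by
  obtain ⟨B, hBA, hBind, hrA⟩ := exists_basis_minCut N A
  have hmB : m ≤ B.card := by omega
  obtain ⟨ξ, hξB, hξcard⟩ := Finset.exists_subset_card_eq hmB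
  exact ⟨ξ, hξB.trans hBA, hξcard,
    by rw [minCutChans_of_subset_indep N hBind hξB, hξcard]⟩

variable (F : Type*) [Field F]

/-- If every source path ending at `e` meets the cut `C`, then `f e` lies in the span of the
kernels of `C`. -/
lemma kernel_mem_span_of_cut {N : Network V E} {ω : ℕ} {k : E → E → F} {ks : Fin ω → E → F}
    {f : E → Fin ω → F} (hf : IsGlobalKernel F N ω k ks f) (C : Finset E) :
    ∀ n : ℕ, ∀ e : E, N.rk e < n →
    (∀ p : List E, N.PathFrom p N.s → p.getLast? = some e → ∃ d ∈ p, d ∈ C) →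
    f e ∈ Submodule.span F (f '' (C : Set E)) := by
  intro n
  induction n with
  | zero => intro e h; omega
  | succ n ih =>
    intro e hrk He
    by_cases heC : e ∈ C
    · exact Submodule.subset_span ⟨e, heC, rfl⟩
    · have hts : N.tail e ≠ N.s := by
        intro h
        have hpath : N.PathFrom [e] N.s := by
          refine ⟨⟨List.cons_ne_nil _ _, List.isChain_singleton _⟩, ?_⟩
          intro x hx; simp only [List.head?_cons, Option.mem_some_iff] at hx; subst hx; exact h
        obtain ⟨d, hd, hdC⟩ := He [e] hpath rfl
        simp only [List.mem_singleton] at hd; subst hd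
        exact heC hdC
      rw [hf e]
      have h2 : (∑ i : Fin ω, (if N.tail e = N.s then ks i e else 0) •
          (Pi.single i 1 : Fin ω → F)) = 0 := by
        refine Finset.sum_eq_zero fun i _ => ?_
        rw [if_neg hts, zero_smul]
      rw [h2, add_zero]
      refine Submodule.sum_mem _ fun d _ => ?_
      by_cases hde : N.head d = N.tail e
      · rw [if_pos hde]
        refine Submodule.smul_mem _ _ ?_
        have hrkd : N.rk d < n := by
          have := N.acyclic d e hde
          omega
        refine ih d hrkd ?_
        intro p hp hplast
        have hpath : N.PathFrom (p ++ [e]) N.s := by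
          refine ⟨⟨by simp, ?_⟩, ?_⟩
          · refine List.IsChain.append hp.1.2 (List.isChain_singleton _) ?_
            intro x hx y hy
            simp only [List.head?_cons, Option.mem_some_iff] at hy
            rw [hplast, Option.mem_some_iff] at hx
            subst hx; subst hy; exact hde
          · intro x hx
            rw [List.head?_append, Option.mem_def] at hx
            cases hhp : p.head? with
            | none => exact absurd (List.head?_eq_none_iff.mp hhp) hp.1.1
            | some y =>
              rw [hhp] at hx
              simp only [Option.some_or, Option.some.injEq] at hx
              subst hx
              exact hp.2 y (by rw [hhp]; rfl)
        obtain ⟨x, hx, hxC⟩ := He (p ++ [e]) hpath List.getLast?_concat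
        rcases List.mem_append.mp hx with h | h
        · exact ⟨x, h, hxC⟩
        · simp only [List.mem_singleton] at h; subst h
          exact absurd hxC heC
      · rw [if_neg hde]; exact Submodule.zero_mem _

lemma span_le_span_of_cut {N : Network V E} {ω : ℕ} {k : E → E → F} {ks : Fin ω → E → F}
    {f : E → Fin ω → F} (hf : IsGlobalKernel F N ω k ks f) {C ξ : Finset E}
    (hC : N.IsCutChans C ξ) :
    Submodule.span F (f '' (ξ : Set E)) ≤ Submodule.span F (f '' (C : Set E)) := by
  rw [Submodule.span_le]
  rintro v ⟨e, heξ, rfl⟩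
  refine kernel_mem_span_of_cut F hf C (N.rk e + 1) e (Nat.lt_succ_self _) ?_
  intro p hp hplast
  exact hC p hp ⟨e, by simp [hplast], heξ⟩

end AuxStatement0

/-- For an `ω`-dimensional linear network code on a single-source
acyclic network, the following are equivalent: (1) for every nonempty collection
`ξ ⊆ E` with `|ξ| = min{ω, C_ξ}`, the global kernels `f_e`, `e ∈ ξ`, are linearly
independent; (2) for every nonempty collection `ξ' ⊆ E`,
`dim span{f_e : e ∈ ξ'} = min{ω, C_{ξ'}}`. -/
theorem statement0 {V E : Type*} [Fintype V] [Fintype E] [DecidableEq V] [DecidableEq E]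
    (F : Type*) [Field F] (N : Network V E) (ω : ℕ)
    (k : E → E → F) (ks : Fin ω → E → F) (f : E → Fin ω → F)
    (hf : IsGlobalKernel F N ω k ks f) :
    (∀ ξ : Finset E, ξ.Nonempty → ξ.card = min ω (N.minCutChans ξ) →
        LinearIndependent F (fun e : ξ => f e)) ↔
    (∀ ξ' : Finset E, ξ'.Nonempty →
        Module.finrank F (Submodule.span F (f '' (ξ' : Set E))) = min ω (N.minCutChans ξ')) := by
  classical
  constructor
  · -- (1) → (2)
    intro h1 ξ' hξ'
    have hupper : Module.finrank F (Submodule.span F (f '' (ξ' : Set E)))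
        ≤ min ω (N.minCutChans ξ') := by
      refine le_min ?_ ?_
      · calc Module.finrank F (Submodule.span F (f '' (ξ' : Set E)))
            ≤ Module.finrank F (Fin ω → F) := Submodule.finrank_le _
          _ = ω := Module.finrank_fin_fun F
      · obtain ⟨C, hC, hcard⟩ := exists_minCut N ξ'
        have hle := span_le_span_of_cut F hf hC
        have h2 : Module.finrank F (Submodule.span F (f '' (C : Set E))) ≤ C.card := by
          have himg : f '' (C : Set E) = ((C.image f : Finset (Fin ω → F)) : Set (Fin ω → F)) := by
            simp [Finset.coe_image]
          rw [himg]
          calc Module.finrank F (Submodule.span F ((C.image f : Finset (Fin ω → F)) :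
                Set (Fin ω → F))) ≤ (C.image f).card := finrank_span_finset_le_card _
            _ ≤ C.card := Finset.card_image_le
        calc Module.finrank F (Submodule.span F (f '' (ξ' : Set E)))
            ≤ Module.finrank F (Submodule.span F (f '' (C : Set E))) :=
              Submodule.finrank_mono hle
          _ ≤ C.card := h2
          _ = N.minCutChans ξ' := hcard
    refine le_antisymm hupper ?_
    set m := min ω (N.minCutChans ξ') with hm
    rcases Nat.eq_zero_or_pos m with hm0 | hmpos
    · omega
    · have hmle : m ≤ N.minCutChans ξ' := min_le_right _ _
      obtain ⟨ξ, hξsub, hξcard, hξcut⟩ := exists_indep_subset_minCut N ξ' hmle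
      have hξne : ξ.Nonempty := Finset.card_pos.mp (by omega)
      have hcond : ξ.card = min ω (N.minCutChans ξ) := by
        rw [hξcard, hξcut]
        have : m ≤ ω := min_le_left _ _
        omega
      have hli := h1 ξ hξne hcond
      have hrange : Set.range (fun e : ξ => f e) = f '' (ξ : Set E) :=
        (Set.image_eq_range f (ξ : Set E)).symm
      have hfr : Module.finrank F (Submodule.span F (f '' (ξ : Set E))) = m := by
        have := finrank_span_eq_card hli
        rw [hrange] at this
        rw [this, Fintype.card_coe, hξcard]
      calc m = Module.finrank F (Submodule.span F (f '' (ξ : Set E))) := hfr.symm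
        _ ≤ Module.finrank F (Submodule.span F (f '' (ξ' : Set E))) :=
            Submodule.finrank_mono (Submodule.span_mono (Set.image_mono (f := f) (by
              exact_mod_cast hξsub)))
  · -- (2) → (1)
    intro h2 ξ hξne hξcard
    have hdim := h2 ξ hξne
    rw [← hξcard] at hdim
    rw [linearIndependent_iff_card_eq_finrank_span]
    have hrange : Set.range (fun e : ξ => f e) = f '' (ξ : Set E) :=
      (Set.image_eq_range f (ξ : Set E)).symm
    rw [Fintype.card_coe, Set.finrank, hrange, hdim]
end

section
/- Let G=(V,E) be a single-source acyclic network, T a collection of non-source nodes, and ρ={e_1,…,e_l}⊆E an error pattern with e_j∈In(i_j) for 1≤j≤l. Construct a modified network from G by introducing a new source node s_ρ, adding the l new channels e_j'=(s_ρ, i_j) for 1≤j≤l, and deleting the channels e_1,…,e_l. Then rank_T(ρ), the rank of the error pattern ρ with respect to T in the original network G, equals the minimum cut capacity between s_ρ and T in the modified network. -/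
open scoped BigOperators

/-- The modified network of `N` for an error pattern `ρ`: a new source node `s_ρ` is
introduced, and every channel `e ∈ ρ` is replaced by the new channel
`e' = (s_ρ, head e)` (all other channels are unchanged). -/
def modNet {V E : Type*} (N : Network V E) (ρ : Finset E) [DecidableEq E] :
    Network (V ⊕ Unit) E where
  tail e := if e ∈ ρ then Sum.inr () else Sum.inl (N.tail e)
  head e := Sum.inl (N.head e)
  s := Sum.inr ()
  no_in_source e := by simp
  rk := N.rk
  acyclic d e h := by
    by_cases he : e ∈ ρ
    · simp [he] at h
    · simp only [he, if_neg, if_false] at h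
      exact N.acyclic d e (Sum.inl.inj h)

section Statement1Aux

variable {V E : Type*} [Fintype V] [Fintype E] [DecidableEq V] [DecidableEq E]
variable {F : Type*} [Field F]

lemma aux_extk_apply_inr {ω : ℕ} (N : Network V E) {k : E → E → F} {ks : Fin ω → E → F}
    {f : E → (Fin ω ⊕ E) → F} (hf : IsExtKernel F N ω k ks f) (c : E) (x : E) :
    f c (Sum.inr x)
      = (∑ d' : E, if N.head d' = N.tail c then k d' c * f d' (Sum.inr x) else 0)
        + (if x = c then 1 else 0) := by
  conv_lhs => rw [hf c]
  simp only [Pi.add_apply, Finset.sum_apply]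
  have h1 : ∀ d' : E, (if N.head d' = N.tail c then k d' c • f d' else 0) (Sum.inr x)
      = if N.head d' = N.tail c then k d' c * f d' (Sum.inr x) else 0 := by
    intro d'; split_ifs <;> simp
  have h2 : ∀ i : Fin ω, ((if N.tail c = N.s then ks i c else 0) • (Pi.single (Sum.inl i) 1 : (Fin ω ⊕ E) → F)) (Sum.inr x) = 0 := by
    intro i; simp [Pi.single_apply]
  rw [Finset.sum_congr rfl fun d' _ => h1 d', Finset.sum_congr rfl fun i _ => h2 i]
  simp [Pi.single_apply]

/-- dual recursion for the extended global kernels -/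
lemma aux_dualRec {ω : ℕ} (N : Network V E) {k : E → E → F} {ks : Fin ω → E → F}
    {f : E → (Fin ω ⊕ E) → F} (hf : IsExtKernel F N ω k ks f) (d c : E) :
    f c (Sum.inr d) = (if c = d then 1 else 0)
      + ∑ e : E, (if N.head d = N.tail e then k d e * f c (Sum.inr e) else 0) := by
  classical
  set K : Matrix E E F := Matrix.of (fun a b => if N.head a = N.tail b then k a b else 0) with hK
  set M : Matrix E E F := Matrix.of (fun a b => f b (Sum.inr a)) with hM
  have hMK : M * (1 - K) = 1 := by
    ext x c'
    have hexp := aux_extk_apply_inr N hf c' x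
    simp only [Matrix.mul_apply, Matrix.sub_apply, Matrix.one_apply, hM, hK, Matrix.of_apply]
    have hterm : ∀ d' : E, f d' (Sum.inr x) * ((if d' = c' then (1:F) else 0) - (if N.head d' = N.tail c' then k d' c' else 0))
        = (if d' = c' then (1:F) else 0) * f d' (Sum.inr x) - (if N.head d' = N.tail c' then k d' c' * f d' (Sum.inr x) else 0) := by
      intro d'; split_ifs <;> ring
    rw [Finset.sum_congr rfl fun d' _ => hterm d', Finset.sum_sub_distrib]
    have h1 : ∑ d' : E, (if d' = c' then (1:F) else 0) * f d' (Sum.inr x) = f c' (Sum.inr x) := by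
      rw [Finset.sum_congr rfl (fun d' _ => by rw [ite_mul, zero_mul, one_mul])]
      exact (Finset.sum_ite_eq' Finset.univ c' (fun d' => f d' (Sum.inr x))).trans (by simp)
    rw [h1, hexp]
    ring
  have hKM : (1 - K) * M = 1 := mul_eq_one_comm.mp hMK
  have h := congrArg (fun A : Matrix E E F => A d c) hKM
  simp only [Matrix.mul_apply, Matrix.sub_apply, Matrix.one_apply, hM, hK, Matrix.of_apply] at h
  have hsplit : ∀ e : E, ((if d = e then (1:F) else 0) - (if N.head d = N.tail e then k d e else 0)) * f c (Sum.inr e)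
      = (if d = e then (1:F) else 0) * f c (Sum.inr e) - (if N.head d = N.tail e then k d e * f c (Sum.inr e) else 0) := by
    intro e; split_ifs <;> ring
  rw [Finset.sum_congr rfl fun e _ => hsplit e, Finset.sum_sub_distrib] at h
  have h1 : ∑ e : E, (if d = e then (1:F) else 0) * f c (Sum.inr e) = f c (Sum.inr d) := by
    rw [Finset.sum_congr rfl (fun e _ => by rw [ite_mul, zero_mul, one_mul])]
    exact (Finset.sum_ite_eq Finset.univ d (fun e => f c (Sum.inr e))).trans (by simp)
  rw [h1] at h
  have hcomm : (if c = d then (1:F) else 0) = (if d = c then 1 else 0) := by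
    simp [eq_comm]
  rw [hcomm]
  linear_combination h

/-- `d` is covered: every path in `N` starting with `d`, whose later channels avoid `ρ`,
and which ends in `T`, meets `C`. -/
def AuxCoveredBy (N : Network V E) (ρ C : Finset E) (T : Finset V) (d : E) : Prop :=
  ∀ p : List E, p.Chain' (fun a b => N.head a = N.tail b) → p.head? = some d →
    (∀ e ∈ p.tail, e ∉ ρ) → (∃ e ∈ p.getLast?, N.head e ∈ T) → ∃ e ∈ p, e ∈ C

lemma aux_covered_mem {ω : ℕ} (N : Network V E) {k : E → E → F} {ks : Fin ω → E → F}
    {f : E → (Fin ω ⊕ E) → F} (hf : IsExtKernel F N ω k ks f)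
    (T : Finset V) (ρ C : Finset E) (hρ : ∀ d ∈ ρ, AuxCoveredBy N ρ C T d) :
    ∀ (n : ℕ) (d : E), Finset.univ.sup N.rk + 1 - N.rk d ≤ n →
      AuxCoveredBy N ρ C T d →
      rowT F N f T (Sum.inr d) ∈ DeltaT F N f T C := by
  intro n
  induction n with
  | zero =>
    intro d hd _
    have : N.rk d ≤ Finset.univ.sup N.rk := Finset.le_sup (Finset.mem_univ d)
    omega
  | succ n ih =>
    intro d hd hcov
    by_cases hdC : d ∈ C
    · exact Submodule.subset_span ⟨d, hdC, rfl⟩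
    have hhd : N.head d ∉ T := by
      intro h
      obtain ⟨e, he, heC⟩ := hcov [d] (List.isChain_singleton d) rfl (by simp) (by simp [h])
      simp only [List.mem_singleton] at he
      exact hdC (he ▸ heC)
    have hrow : rowT F N f T (Sum.inr d)
        = ∑ e : E, (if N.head d = N.tail e then k d e else 0) • rowT F N f T (Sum.inr e) := by
      funext c
      simp only [rowT, Finset.sum_apply, Pi.smul_apply, smul_eq_mul]
      by_cases hc : N.head c ∈ T
      · simp only [hc, if_true]
        rw [aux_dualRec N hf d c]
        have h0 : (if c = d then (1:F) else 0) = 0 := by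
          rw [if_neg]; rintro rfl; exact hhd hc
        rw [h0, zero_add]
        refine Finset.sum_congr rfl fun e _ => ?_
        split_ifs <;> simp [hc]
      · simp only [hc, if_false]
        symm
        refine Finset.sum_eq_zero fun e _ => ?_
        split_ifs <;> simp [hc]
    rw [hrow]
    apply Submodule.sum_mem
    intro e _
    by_cases hQ : N.head d = N.tail e
    · refine Submodule.smul_mem _ _ ?_
      have hrk : N.rk d < N.rk e := N.acyclic d e hQ
      have hrke : N.rk e ≤ Finset.univ.sup N.rk := Finset.le_sup (Finset.mem_univ e)
      refine ih e (by omega) ?_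
      by_cases heρ : e ∈ ρ
      · exact hρ e heρ
      · intro p hchain hhead htail hlast
        cases p with
        | nil => simp at hhead
        | cons b p' =>
          have hb : b = e := by simpa using hhead
          subst hb
          have hdp : (d :: b :: p').Chain' (fun a b => N.head a = N.tail b) :=
            List.isChain_cons_cons.mpr ⟨hQ, hchain⟩
          have htail' : ∀ x ∈ (d :: b :: p').tail, x ∉ ρ := by
            intro x hx
            rcases List.mem_cons.mp hx with rfl | hx'
            · exact heρ
            · exact htail x hx'
          have hlast' : ∃ x ∈ (d :: b :: p').getLast?, N.head x ∈ T := by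
            obtain ⟨x, hx, hxT⟩ := hlast
            exact ⟨x, by rwa [List.getLast?_cons_cons], hxT⟩
          obtain ⟨x, hx, hxC⟩ := hcov (d :: b :: p') hdp rfl htail' hlast'
          rcases List.mem_cons.mp hx with rfl | hx'
          · exact absurd hxC hdC
          · exact ⟨x, hx', hxC⟩
    · rw [if_neg hQ, zero_smul]
      exact Submodule.zero_mem _

/-- existence of extended global kernels for arbitrary local coefficients -/
noncomputable def auxExtK (N : Network V E) (ω : ℕ) (k : E → E → F) (ks : Fin ω → E → F) :
    E → (Fin ω ⊕ E) → F := fun e =>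
  (∑ d ∈ (Finset.univ.filter fun d => N.head d = N.tail e).attach,
      k d.1 e • auxExtK N ω k ks d.1)
    + (∑ i : Fin ω, (if N.tail e = N.s then ks i e else 0) • (Pi.single (Sum.inl i) 1 : (Fin ω ⊕ E) → F))
    + (Pi.single (Sum.inr e) 1 : (Fin ω ⊕ E) → F)
termination_by e => N.rk e
decreasing_by
  rename_i d
  have hd := d.2
  simp only [Finset.mem_filter] at hd
  exact N.acyclic _ _ hd.2

lemma auxExtK_isExt (N : Network V E) (ω : ℕ) (k : E → E → F) (ks : Fin ω → E → F) :
    IsExtKernel F N ω k ks (auxExtK N ω k ks) := by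
  intro e
  rw [auxExtK]
  congr 1
  congr 1
  rw [Finset.sum_attach (Finset.univ.filter fun d => N.head d = N.tail e)
    (fun d => k d e • auxExtK N ω k ks d), Finset.sum_filter]

lemma aux_chain'_iff_get {α : Type*} {R : α → α → Prop} {l : List α} :
    l.Chain' R ↔ ∀ (i : ℕ) (h : i < l.length - 1),
      R (l.get ⟨i, by omega⟩) (l.get ⟨i + 1, by omega⟩) := by
  rw [show l.Chain' R ↔ l.IsChain R from Iff.rfl, List.isChain_iff_getElem]
  simp only [List.get_eq_getElem]
  constructor <;> intro h i hi <;> exact h i (by omega)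

end Statement1Aux

/-- The rank `rank_T(ρ)` of an error pattern `ρ` with respect to a
collection `T` of non-source nodes equals the minimum cut capacity between the new
source `s_ρ` and `T` in the modified network. -/
theorem statement1 {V E : Type*} [Fintype V] [Fintype E] [DecidableEq V] [DecidableEq E]
    (F : Type*) [Field F] [Fintype F] (N : Network V E) (ω : ℕ) (hω : 1 ≤ ω)
    (T : Finset V) (hT : T.Nonempty) (hTs : N.s ∉ T) (ρ : Finset E) :
    rankT F N ω T ρ = (modNet N ρ).minCutNodes (T.image Sum.inl) := by
  classical
  apply le_antisymm
  · -- rank ≤ min cut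
    have hS2ne : {n | ∃ C : Finset E, (modNet N ρ).IsCutNodes C (T.image Sum.inl) ∧ C.card = n}.Nonempty := by
      refine ⟨Finset.univ.card, Finset.univ, ?_, rfl⟩
      intro p hp _
      exact ⟨p.head hp.1.1, List.head_mem _, Finset.mem_univ _⟩
    obtain ⟨C, hCcut, hCcard⟩ :
        ∃ C : Finset E, (modNet N ρ).IsCutNodes C (T.image Sum.inl)
          ∧ C.card = (modNet N ρ).minCutNodes (T.image Sum.inl) := Nat.sInf_mem hS2ne
    have hcovρ : ∀ d ∈ ρ, AuxCoveredBy N ρ C T d := by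
      intro d hdρ p hchain hhead htail hlast
      have hpne : p ≠ [] := by rintro rfl; simp at hhead
      apply hCcut p
      · refine ⟨⟨hpne, ?_⟩, ?_⟩
        · rw [aux_chain'_iff_get] at hchain ⊢
          intro i hi
          have h1 := hchain i hi
          have hmem : p.get ⟨i + 1, by omega⟩ ∈ p.tail := by
            have h2 : i < p.tail.length := by
              rw [List.length_tail]; omega
            have := List.get_tail p i h2
            rw [← this]
            exact List.get_mem _ _
          have h2 : p.get ⟨i + 1, by omega⟩ ∉ ρ := htail _ hmem
          show (modNet N ρ).head _ = (modNet N ρ).tail _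
          show Sum.inl (N.head _) = if _ ∈ ρ then Sum.inr () else Sum.inl (N.tail _)
          rw [if_neg h2, h1]
        · intro e he
          rw [hhead, Option.mem_some_iff] at he
          subst he
          show (if d ∈ ρ then Sum.inr () else Sum.inl (N.tail d)) = Sum.inr ()
          rw [if_pos hdρ]
      · obtain ⟨e, he, heT⟩ := hlast
        refine ⟨e, he, ?_⟩
        show Sum.inl (N.head e) ∈ T.image Sum.inl
        exact Finset.mem_image_of_mem _ heT
    have hdomC : DominatesT F N ω T ρ C := by
      intro k ks f hfk
      apply Submodule.span_le.mpr
      rintro _ ⟨d, hd, rfl⟩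
      exact aux_covered_mem N hfk T ρ C hcovρ _ d le_rfl (hcovρ d hd)
    have h1 : rankT F N ω T ρ ≤ C.card := Nat.sInf_le ⟨C, hdomC, rfl⟩
    rwa [hCcard] at h1
  · -- min cut ≤ rank
    have hS1ne : {n | ∃ ρ'' : Finset E, DominatesT F N ω T ρ ρ'' ∧ ρ''.card = n}.Nonempty :=
      ⟨ρ.card, ρ, fun k ks f hf => le_rfl, rfl⟩
    obtain ⟨ρ', hdom, hcard⟩ :
        ∃ ρ'' : Finset E, DominatesT F N ω T ρ ρ'' ∧ ρ''.card = rankT F N ω T ρ :=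
      Nat.sInf_mem hS1ne
    have hcut : (modNet N ρ).IsCutNodes ρ' (T.image Sum.inl) := by
      by_contra hnc
      simp only [Network.IsCutNodes] at hnc
      push_neg at hnc
      obtain ⟨p, hp, hlastT, hno⟩ := hnc
      obtain ⟨⟨hpne, hchain⟩, hstart⟩ := hp
      set n := p.length with hn
      have hnpos : 0 < n := List.length_pos_iff.mpr hpne
      set a : ℕ → E := fun i => p.getD i (p.head hpne) with ha
      have hget : ∀ (i : ℕ) (h : i < n), a i = p.get ⟨i, h⟩ := by
        intro i h
        show p.getD i (p.head hpne) = p.get ⟨i, h⟩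
        rw [List.getD_eq_getElem _ _ h, List.get_eq_getElem]
      have hmemp : ∀ i, i < n → a i ∈ p := by
        intro i h
        rw [hget i h]
        exact List.get_mem _ _
      have hstep : ∀ i, i + 1 < n → N.head (a i) = N.tail (a (i + 1)) ∧ a (i + 1) ∉ ρ := by
        intro i h
        rw [aux_chain'_iff_get] at hchain
        have hc := hchain i (by omega)
        rw [← hget i (by omega), ← hget (i + 1) h] at hc
        have hc' : Sum.inl (N.head (a i))
            = (if a (i + 1) ∈ ρ then Sum.inr () else Sum.inl (N.tail (a (i + 1)))) := hc
        by_cases hρ1 : a (i + 1) ∈ ρ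
        · rw [if_pos hρ1] at hc'; exact absurd hc' (by simp)
        · rw [if_neg hρ1] at hc'
          exact ⟨Sum.inl.inj hc', hρ1⟩
      have hnodup : p.Nodup := by
        have hchain2 : p.Chain' (fun x y => N.rk x < N.rk y) :=
          hchain.imp (fun {x y} h => (modNet N ρ).acyclic x y h)
        haveI : IsTrans E (fun x y : E => N.rk x < N.rk y) := ⟨fun _ _ _ => Nat.lt_trans⟩
        exact (List.isChain_iff_pairwise.mp hchain2).imp (fun {x y} h heq => by subst heq; omega)
      have hinj : ∀ i j, i < n → j < n → a i = a j → i = j := by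
        intro i j hi hj hij
        rw [hget i hi, hget j hj] at hij
        have := (hnodup.get_inj_iff).mp hij
        exact Fin.mk.inj_iff.mp this
      have ha0 : a 0 ∈ ρ := by
        have h0 := hstart (p.head hpne) (by rw [List.head?_eq_head]; rfl)
        have hh : a 0 = p.head hpne := by
          rw [hget 0 hnpos, List.get_eq_getElem, ← List.head_eq_getElem_zero hpne]
        rw [← hh] at h0
        have h0' : (if a 0 ∈ ρ then Sum.inr () else Sum.inl (N.tail (a 0))) = (Sum.inr () : V ⊕ Unit) := h0
        by_contra hcon
        rw [if_neg hcon] at h0'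
        exact absurd h0' (by simp)
      have hlast' : N.head (a (n - 1)) ∈ T := by
        obtain ⟨e, he, heT⟩ := hlastT
        rw [List.getLast?_eq_getLast hpne, Option.mem_some_iff] at he
        subst he
        have hgl : p.getLast hpne = a (n - 1) := by
          rw [hget (n - 1) (by omega), List.getLast_eq_getElem, List.get_eq_getElem]
        rw [hgl] at heT
        have heT' : Sum.inl (N.head (a (n - 1))) ∈ T.image Sum.inl := heT
        obtain ⟨v, hv, hve⟩ := Finset.mem_image.mp heT'
        rwa [← Sum.inl.inj hve]
      have hρ'p : ∀ i, i < n → a i ∉ ρ' := fun i h => hno _ (hmemp i h)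
      set k : E → E → F := fun x y =>
        if ∃ i, i + 1 < n ∧ a i = x ∧ a (i + 1) = y then 1 else 0 with hk
      set ks : Fin ω → E → F := fun _ _ => 0 with hks
      set f := auxExtK N ω k ks with hfdef
      have hfk : IsExtKernel F N ω k ks f := auxExtK_isExt N ω k ks
      have key : ∀ m, m < n → f (a m)
          = ∑ j ∈ Finset.range (m + 1), (Pi.single (Sum.inr (a j)) 1 : (Fin ω ⊕ E) → F) := by
        intro m
        induction m with
        | zero =>
          intro h0
          rw [hfk (a 0)]
          have hz1 : (∑ d : E, if N.head d = N.tail (a 0) then k d (a 0) • f d else 0) = 0 := by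
            refine Finset.sum_eq_zero fun x _ => ?_
            split_ifs with hx
            · have hk0 : k x (a 0) = 0 := by
                show (if ∃ i, i + 1 < n ∧ a i = x ∧ a (i + 1) = a 0 then (1:F) else 0) = 0
                rw [if_neg]
                rintro ⟨i, hi, hx1, hx2⟩
                have := hinj (i + 1) 0 hi h0 hx2
                omega
              rw [hk0, zero_smul]
            · rfl
          have hz2 : (∑ i : Fin ω, (if N.tail (a 0) = N.s then ks i (a 0) else 0)
              • (Pi.single (Sum.inl i) 1 : (Fin ω ⊕ E) → F)) = 0 := by
            refine Finset.sum_eq_zero fun i _ => ?_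
            have : (if N.tail (a 0) = N.s then ks i (a 0) else 0) = 0 := by
              split_ifs <;> rfl
            rw [this, zero_smul]
          rw [hz1, hz2]
          simp
        | succ m ihm =>
          intro hm1
          have hm : m < n := by omega
          rw [hfk (a (m + 1))]
          have hz2 : (∑ i : Fin ω, (if N.tail (a (m + 1)) = N.s then ks i (a (m + 1)) else 0)
              • (Pi.single (Sum.inl i) 1 : (Fin ω ⊕ E) → F)) = 0 := by
            refine Finset.sum_eq_zero fun i _ => ?_
            have : (if N.tail (a (m + 1)) = N.s then ks i (a (m + 1)) else 0) = 0 := by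
              split_ifs <;> rfl
            rw [this, zero_smul]
          have hsum : (∑ d : E, if N.head d = N.tail (a (m + 1)) then k d (a (m + 1)) • f d else 0)
              = f (a m) := by
            have hterm : ∀ d : E, (if N.head d = N.tail (a (m + 1)) then k d (a (m + 1)) • f d else 0)
                = if d = a m then f (a m) else 0 := by
              intro d
              have hkd : k d (a (m + 1)) = if d = a m then 1 else 0 := by
                show (if ∃ i, i + 1 < n ∧ a i = d ∧ a (i + 1) = a (m + 1) then (1:F) else 0) = _
                by_cases hd : d = a m
                · rw [if_pos ⟨m, hm1, hd.symm, rfl⟩, if_pos hd]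
                · rw [if_neg, if_neg hd]
                  rintro ⟨i, hi, rfl, h2⟩
                  have hieq := hinj (i + 1) (m + 1) hi hm1 h2
                  have him : i = m := by omega
                  exact hd (by rw [him])
              by_cases hd : d = a m
              · subst hd
                rw [if_pos (hstep m hm1).1, hkd, if_pos rfl, one_smul, if_pos rfl]
              · rw [if_neg hd]
                split_ifs with hh
                · rw [hkd, if_neg hd, zero_smul]
                · rfl
            rw [Finset.sum_congr rfl fun d _ => hterm d,
              Finset.sum_ite_eq' Finset.univ (a m) (fun _ => f (a m))]
            simp
          rw [hsum, hz2, add_zero, ihm hm, Finset.sum_range_succ]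
          rw [Finset.sum_range_succ, Finset.sum_range_succ]
      -- derive the contradiction
      have hfc : f (a (n - 1))
          = ∑ j ∈ Finset.range n, (Pi.single (Sum.inr (a j)) 1 : (Fin ω ⊕ E) → F) := by
        have hkey := key (n - 1) (by omega)
        rwa [Nat.sub_add_cancel hnpos] at hkey
      have hvmem : rowT F N f T (Sum.inr (a 0)) ∈ DeltaT F N f T ρ :=
        Submodule.subset_span ⟨a 0, ha0, rfl⟩
      have hvmem' := hdom k ks f hfk hvmem
      have hker : ∀ w ∈ DeltaT F N f T ρ', w (a (n - 1)) = 0 := by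
        intro w hw
        have hle : DeltaT F N f T ρ'
            ≤ LinearMap.ker (LinearMap.proj (R := F) (φ := fun _ : E => F) (a (n - 1))) := by
          apply Submodule.span_le.mpr
          rintro _ ⟨d', hd', rfl⟩
          simp only [SetLike.mem_coe, LinearMap.mem_ker, LinearMap.proj_apply]
          show (if N.head (a (n - 1)) ∈ T then f (a (n - 1)) (Sum.inr d') else 0) = 0
          rw [if_pos hlast', hfc]
          simp only [Finset.sum_apply, Pi.single_apply]
          refine Finset.sum_eq_zero fun j hj => ?_
          rw [if_neg]
          intro heq
          have : d' = a j := by simpa using heq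
          exact hρ'p j (Finset.mem_range.mp hj) (this ▸ hd')
        have := hle hw
        simpa using this
      have hv1 : rowT F N f T (Sum.inr (a 0)) (a (n - 1)) = 1 := by
        show (if N.head (a (n - 1)) ∈ T then f (a (n - 1)) (Sum.inr (a 0)) else 0) = 1
        rw [if_pos hlast', hfc]
        simp only [Finset.sum_apply, Pi.single_apply]
        have hterm : ∀ j ∈ Finset.range n,
            (if (Sum.inr (a 0) : Fin ω ⊕ E) = Sum.inr (a j) then (1:F) else 0)
              = if j = 0 then 1 else 0 := by
          intro j hj
          by_cases hj0 : j = 0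
          · subst hj0; simp
          · rw [if_neg hj0, if_neg]
            intro heq
            have : a 0 = a j := by simpa using heq
            exact hj0 (hinj j 0 (Finset.mem_range.mp hj) hnpos this.symm)
        rw [Finset.sum_congr rfl hterm, Finset.sum_ite_eq' (Finset.range n) 0 (fun _ => (1:F))]
        simp [hnpos]
      have hzero := hker _ hvmem'
      rw [hv1] at hzero
      exact one_ne_zero hzero
    have h2 : (modNet N ρ).minCutNodes (T.image Sum.inl) ≤ ρ'.card := Nat.sInf_le ⟨ρ', hcut, rfl⟩
    rwa [hcard] at h2
end

section
/- (Extended Singleton Bound) For any strongly sup-regular ω-dimensional linear network error correction code on a single-source acyclic network G=(V,E) and any nonempty collection T of non-source nodes, the minimum distance at T satisfies d_min^{(T)}(G) ≤ δ_T+1 if C_T ≥ ω, and d_min^{(T)}(G) ≤ 1 if C_T < ω. -/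
open scoped BigOperators

section AuxProof

variable {V E : Type*} [Fintype V] [Fintype E] [DecidableEq V] [DecidableEq E]
variable {F : Type*} [Field F] {ω : ℕ}
variable {N : Network V E} {k : E → E → F} {ks : Fin ω → E → F} {f : E → (Fin ω ⊕ E) → F}

lemma ext_apply (hf : IsExtKernel F N ω k ks f) (e : E) (d : Fin ω ⊕ E) :
    f e d = (∑ d' : E, if N.head d' = N.tail e then k d' e * f d' d else 0)
      + (∑ i : Fin ω, (if N.tail e = N.s then ks i e else 0)
          * (Pi.single (Sum.inl i) 1 : (Fin ω ⊕ E) → F) d)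
      + (Pi.single (Sum.inr e) 1 : (Fin ω ⊕ E) → F) d := by
  conv_lhs => rw [hf e]
  simp only [Pi.add_apply, Finset.sum_apply, Pi.smul_apply, smul_eq_mul]
  congr 1
  congr 1
  refine Finset.sum_congr rfl fun d' _ => ?_
  split_ifs <;> simp

lemma f_inr_zero_aux (hf : IsExtKernel F N ω k ks f) :
    ∀ n, ∀ d e : E, N.rk d < n → e ≠ d → N.rk d ≤ N.rk e → f d (Sum.inr e) = 0 := by
  intro n
  induction n with
  | zero => intro d e h; omega
  | succ n ih =>
    intro d e hd hne hrk
    rw [ext_apply hf]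
    have h1 : ∀ d' : E, (if N.head d' = N.tail d then k d' d * f d' (Sum.inr e) else 0) = 0 := by
      intro d'
      split_ifs with h
      · have hlt := N.acyclic d' d h
        have : f d' (Sum.inr e) = 0 := by
          refine ih d' e (by omega) (fun he => by subst he; omega) (by omega)
        rw [this, mul_zero]
      · rfl
    have h2 : ∀ i : Fin ω,
        (if N.tail d = N.s then ks i d else 0)
          * (Pi.single (Sum.inl i) 1 : (Fin ω ⊕ E) → F) (Sum.inr e) = 0 := by
      intro i; rw [Pi.single_eq_of_ne (by simp)]; ring
    rw [Finset.sum_congr rfl (fun d' _ => h1 d'), Finset.sum_congr rfl (fun i _ => h2 i)]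
    have : (Pi.single (Sum.inr d) 1 : (Fin ω ⊕ E) → F) (Sum.inr e) = 0 := by
      rw [Pi.single_eq_of_ne (by simpa using hne)]
    simp [this]

lemma f_inr_zero (hf : IsExtKernel F N ω k ks f) {d e : E} (hne : e ≠ d)
    (hrk : N.rk d ≤ N.rk e) : f d (Sum.inr e) = 0 :=
  f_inr_zero_aux hf (N.rk d + 1) d e (by omega) hne hrk

lemma f_inr_self (hf : IsExtKernel F N ω k ks f) (e : E) : f e (Sum.inr e) = 1 := by
  rw [ext_apply hf]
  have h1 : ∀ d' : E, (if N.head d' = N.tail e then k d' e * f d' (Sum.inr e) else 0) = 0 := by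
    intro d'
    split_ifs with h
    · have hlt := N.acyclic d' e h
      rw [f_inr_zero hf (fun he => by subst he; omega) (by omega), mul_zero]
    · rfl
  have h2 : ∀ i : Fin ω,
      (if N.tail e = N.s then ks i e else 0)
        * (Pi.single (Sum.inl i) 1 : (Fin ω ⊕ E) → F) (Sum.inr e) = 0 := by
    intro i; rw [Pi.single_eq_of_ne (by simp)]; ring
  rw [Finset.sum_congr rfl (fun d' _ => h1 d'), Finset.sum_congr rfl (fun i _ => h2 i)]
  simp

lemma f_injective (hf : IsExtKernel F N ω k ks f) : Function.Injective f := by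
  intro a b hab
  by_contra hne
  have h1 : f b (Sum.inr a) = 1 := by rw [← hab]; exact f_inr_self hf a
  have h2 : f a (Sum.inr b) = 1 := by rw [hab]; exact f_inr_self hf b
  have hab' : N.rk a < N.rk b ∨ N.rk b ≤ N.rk a := by omega
  have c1 : N.rk a < N.rk b := by
    by_contra h
    rw [f_inr_zero hf hne (by omega)] at h1
    exact one_ne_zero h1.symm
  rw [f_inr_zero hf (Ne.symm hne) (by omega)] at h2
  exact one_ne_zero h2.symm

/-- `e` is separated from the source by the channel set `C`. -/
def SrcSep (N : Network V E) (C : Finset E) (e : E) : Prop :=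
  ∀ p : List E, N.PathFrom p N.s → p.getLast? = some e → ∃ a ∈ p, a ∈ C

lemma SrcSep.tail_ne_source {C : Finset E} {e : E} (hsep : SrcSep N C e) (heC : e ∉ C) :
    N.tail e ≠ N.s := by
  intro hts
  have hp : N.PathFrom [e] N.s := by
    refine ⟨⟨by simp, List.isChain_singleton _⟩, ?_⟩
    intro a ha
    simp only [List.head?_cons, Option.mem_some_iff] at ha
    subst ha; exact hts
  obtain ⟨a, ha, haC⟩ := hsep [e] hp (by simp)
  simp only [List.mem_singleton] at ha
  subst ha; exact heC haC

lemma SrcSep.pred {C : Finset E} {e d : E} (hsep : SrcSep N C e) (heC : e ∉ C)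
    (hde : N.head d = N.tail e) : SrcSep N C d := by
  intro p hp hlast
  have hpne : p ≠ [] := hp.1.1
  have hp' : N.PathFrom (p ++ [e]) N.s := by
    refine ⟨⟨by simp [hpne], ?_⟩, ?_⟩
    · rw [List.Chain', List.isChain_append]
      refine ⟨hp.1.2, by simp, ?_⟩
      intro x hx y hy
      simp only [List.head?_cons, Option.mem_some_iff] at hy
      rw [hlast, Option.mem_some_iff] at hx
      subst hx; subst hy; exact hde
    · intro a ha
      rw [List.head?_append_of_ne_nil _ hpne] at ha
      exact hp.2 a ha
  obtain ⟨a, ha, haC⟩ := hsep (p ++ [e]) hp' (by simp)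
  rcases List.mem_append.mp ha with h | h
  · exact ⟨a, h, haC⟩
  · simp only [List.mem_singleton] at h
    subst h; exact absurd haC heC

lemma sep_mem_sup (hf : IsExtKernel F N ω k ks f) (C : Finset E) :
    ∀ n, ∀ e, N.rk e < n → SrcSep N C e →
      f e ∈ Submodule.span F (f '' (C : Set E)) ⊔
        Submodule.span F ((fun d => (Pi.single (Sum.inr d) 1 : (Fin ω ⊕ E) → F)) ''
          {d : E | SrcSep N C d ∧ d ∉ C}) := by
  intro n
  induction n with
  | zero => intro e h; omega
  | succ n ih =>
    intro e he hsep
    by_cases heC : e ∈ C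
    · exact Submodule.mem_sup_left (Submodule.subset_span ⟨e, heC, rfl⟩)
    · rw [hf e]
      refine Submodule.add_mem _ (Submodule.add_mem _ ?_ ?_) ?_
      · refine Submodule.sum_mem _ fun d _ => ?_
        split_ifs with h
        · refine Submodule.smul_mem _ _ ?_
          have hlt := N.acyclic d e h
          exact ih d (by omega) (hsep.pred heC h)
        · exact Submodule.zero_mem _
      · refine Submodule.sum_mem _ fun i _ => ?_
        rw [if_neg (hsep.tail_ne_source heC), zero_smul]
        exact Submodule.zero_mem _
      · exact Submodule.mem_sup_right (Submodule.subset_span ⟨e, ⟨hsep, heC⟩, rfl⟩)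

lemma span_indep (hf : IsExtKernel F N ω k ks f) {C : Finset E}
    {a : (Fin ω ⊕ E) → F} (ha : a ∈ Submodule.span F (f '' (C : Set E)))
    (hz : ∀ e ∈ C, a (Sum.inr e) = 0) : a = 0 := by
  classical
  rw [← Finset.coe_image, Submodule.mem_span_finset] at ha
  obtain ⟨g, -, hg⟩ := ha
  rw [Finset.sum_image (fun x _ y _ h => f_injective hf h)] at hg
  suffices hc : ∀ e ∈ C, g (f e) = 0 by
    rw [← hg]
    refine Finset.sum_eq_zero fun e heC => by rw [hc e heC, zero_smul]
  by_contra hcon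
  push_neg at hcon
  have hS : (C.filter fun e => g (f e) ≠ 0).Nonempty := by
    obtain ⟨e, heC, hge⟩ := hcon
    exact ⟨e, Finset.mem_filter.mpr ⟨heC, hge⟩⟩
  obtain ⟨e₀, he₀, hmax⟩ := Finset.exists_max_image _ N.rk hS
  rw [Finset.mem_filter] at he₀
  have heval : a (Sum.inr e₀) = g (f e₀) := by
    rw [← hg, Finset.sum_apply]
    rw [Finset.sum_eq_single e₀]
    · rw [Pi.smul_apply, smul_eq_mul, f_inr_self hf, mul_one]
    · intro e heC hne
      by_cases hge : g (f e) = 0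
      · rw [Pi.smul_apply, hge, zero_smul]
      · have hrk : N.rk e ≤ N.rk e₀ :=
          hmax e (Finset.mem_filter.mpr ⟨heC, hge⟩)
        rw [Pi.smul_apply, f_inr_zero hf (Ne.symm hne) hrk, smul_zero]
    · intro h; exact absurd he₀.1 h
  rw [hz e₀ he₀.1] at heval
  exact he₀.2 heval.symm

lemma singles_vanish {C : Finset E} {b : (Fin ω ⊕ E) → F}
    (hb : b ∈ Submodule.span F ((fun d => (Pi.single (Sum.inr d) 1 : (Fin ω ⊕ E) → F)) ''
      {d : E | SrcSep N C d ∧ d ∉ C})) :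
    (∀ e ∈ C, b (Sum.inr e) = 0) ∧ ∀ i : Fin ω, b (Sum.inl i) = 0 := by
  induction hb using Submodule.span_induction with
  | mem x hx =>
    obtain ⟨d, ⟨-, hdC⟩, rfl⟩ := hx
    constructor
    · intro e heC
      exact Pi.single_eq_of_ne (by simp; rintro rfl; exact hdC heC) 1
    · intro i; exact Pi.single_eq_of_ne (by simp) 1
  | zero => simp
  | add x y hx hy ihx ihy =>
    refine ⟨fun e heC => ?_, fun i => ?_⟩
    · simp [ihx.1 e heC, ihy.1 e heC]
    · simp [ihx.2 i, ihy.2 i]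
  | smul c x hx ihx =>
    refine ⟨fun e heC => ?_, fun i => ?_⟩
    · simp [ihx.1 e heC]
    · simp [ihx.2 i]

lemma phi_apply_eq (φ : Module.Dual F (E → F)) (g : E → F) :
    φ g = ∑ e : E, g e * φ (Pi.single e 1) := by
  conv_lhs => rw [show g = ∑ e : E, g e • (Pi.single e 1 : E → F) by
    funext x; simp [Pi.single_apply, Finset.sum_apply, eq_comm]]
  rw [map_sum]
  refine Finset.sum_congr rfl fun e _ => ?_
  rw [map_smul, smul_eq_mul]

lemma phi_le_delta (hf : IsExtKernel F N ω k ks f) {C : Finset E} {T : Finset V}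
    (hcut : N.IsCutNodes C T) :
    PhiT F N f T ≤ DeltaT F N f T C := by
  rw [← Subspace.dualAnnihilator_le_dualAnnihilator_iff]
  intro φ hφ
  rw [Submodule.mem_dualAnnihilator] at hφ ⊢
  set w : (Fin ω ⊕ E) → F :=
    ∑ e' : E, if N.head e' ∈ T then φ (Pi.single e' 1) • f e' else 0 with hw
  have hwapp : ∀ d : Fin ω ⊕ E, w d = φ (rowT F N f T d) := by
    intro d
    rw [phi_apply_eq φ, hw, Finset.sum_apply]
    refine Finset.sum_congr rfl fun e' _ => ?_
    unfold rowT
    split_ifs with h <;> simp [mul_comm]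
  have hwmem : w ∈ Submodule.span F (f '' (C : Set E)) ⊔
      Submodule.span F ((fun d => (Pi.single (Sum.inr d) 1 : (Fin ω ⊕ E) → F)) ''
        {d : E | SrcSep N C d ∧ d ∉ C}) := by
    refine Submodule.sum_mem _ fun e' _ => ?_
    split_ifs with h
    · refine Submodule.smul_mem _ _ ?_
      refine sep_mem_sup hf C (N.rk e' + 1) e' (by omega) ?_
      intro p hp hlast
      exact hcut p hp ⟨e', hlast, h⟩
    · exact Submodule.zero_mem _
  obtain ⟨a, haA, b, hbB, hab⟩ := Submodule.mem_sup.mp hwmem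
  have hbv := singles_vanish hbB
  have hwC : ∀ e ∈ C, w (Sum.inr e) = 0 := by
    intro e heC
    rw [hwapp]
    exact hφ _ (Submodule.subset_span ⟨e, heC, rfl⟩)
  have ha0 : a = 0 := by
    refine span_indep hf haA fun e heC => ?_
    have := congrFun hab (Sum.inr e)
    simp only [Pi.add_apply] at this
    have h1 := hwC e heC
    have h2 := hbv.1 e heC
    rw [h2] at this
    rw [← this] at h1
    simpa using h1
  have hwb : w = b := by rw [← hab, ha0, zero_add]
  -- now show φ vanishes on PhiT
  intro x hx
  unfold PhiT at hx
  have hker : Set.range (fun i : Fin ω => rowT F N f T (Sum.inl i)) ⊆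
      ↑(LinearMap.ker φ) := by
    rintro y ⟨i, rfl⟩
    simp only [SetLike.mem_coe, LinearMap.mem_ker]
    rw [← hwapp, hwb]
    exact hbv.2 i
  exact (Submodule.span_le.mpr hker) hx

lemma inf_ne_bot_of_card {T : Finset V} {C ρ : Finset E}
    (hle : PhiT F N f T ≤ DeltaT F N f T C) (hρ : ρ ⊆ C)
    (hcard : C.card - ρ.card < Module.finrank F (PhiT F N f T)) :
    DeltaT F N f T ρ ⊓ PhiT F N f T ≠ ⊥ := by
  intro hbot
  classical
  set Φ := PhiT F N f T
  set Δρ := DeltaT F N f T ρ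
  set U := DeltaT F N f T (C \ ρ)
  have hsplit : DeltaT F N f T C ≤ Δρ ⊔ U := by
    unfold DeltaT Δρ U DeltaT
    rw [← Submodule.span_union, ← Set.image_union]
    refine Submodule.span_mono (Set.image_mono ?_)
    intro e he
    simp only [Finset.coe_union, Set.mem_union, Finset.mem_coe, Finset.mem_sdiff] at *
    by_cases h : e ∈ ρ
    · exact Or.inl h
    · exact Or.inr ⟨he, h⟩
  have hU : Module.finrank F U ≤ C.card - ρ.card := by
    have h1 : U = Submodule.span F
        ↑((C \ ρ).image (fun e => rowT F N f T (Sum.inr e))) := by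
      unfold U DeltaT; rw [Finset.coe_image]
    calc Module.finrank F U ≤ ((C \ ρ).image (fun e => rowT F N f T (Sum.inr e))).card := by
          rw [h1]; exact finrank_span_finset_le_card _
      _ ≤ (C \ ρ).card := Finset.card_image_le
      _ = C.card - ρ.card := Finset.card_sdiff_of_subset hρ
  set q := Δρ.mkQ
  have hinj : Function.Injective (q.comp Φ.subtype) := by
    intro x y hxy
    have : (x : E → F) - y ∈ Δρ := by
      rw [← Submodule.Quotient.eq]
      exact hxy
    have hmem : (x : E → F) - y ∈ Δρ ⊓ Φ := ⟨this, Submodule.sub_mem _ x.2 y.2⟩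
    rw [hbot, Submodule.mem_bot, sub_eq_zero] at hmem
    exact Subtype.ext hmem
  have hrange : LinearMap.range (q.comp Φ.subtype) ≤ U.map q := by
    rintro y ⟨x, rfl⟩
    obtain ⟨d, hd, u, hu, hdu⟩ := Submodule.mem_sup.mp (hsplit (hle x.2))
    refine ⟨u, hu, ?_⟩
    have hqd : q d = 0 := by
      simpa [q] using (Submodule.Quotient.mk_eq_zero Δρ).mpr hd
    calc q u = q d + q u := by rw [hqd, zero_add]
      _ = q (d + u) := (map_add q d u).symm
      _ = q x := by rw [hdu]
      _ = (q.comp Φ.subtype) x := rfl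
  have h1 : Module.finrank F Φ =
      Module.finrank F (LinearMap.range (q.comp Φ.subtype)) :=
    (LinearMap.finrank_range_of_inj hinj).symm
  have h2 : Module.finrank F (LinearMap.range (q.comp Φ.subtype)) ≤
      Module.finrank F (U.map q) := Submodule.finrank_mono hrange
  have h3 : Module.finrank F (U.map q) ≤ Module.finrank F U :=
    Submodule.finrank_map_le q U
  omega

end AuxProof

/-- **Extended Singleton Bound.** For any strongly sup-regular
`ω`-dimensional LNEC code and any nonempty collection `T` of non-source nodes,
`d_min^{(T)} ≤ δ_T + 1` if `C_T ≥ ω`, and `d_min^{(T)} ≤ 1` if `C_T < ω`. -/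
theorem statement2 {V E : Type*} [Fintype V] [Fintype E] [DecidableEq V] [DecidableEq E]
    (F : Type*) [Field F] [Fintype F] (N : Network V E) (ω : ℕ) (hω : 1 ≤ ω)
    (k : E → E → F) (ks : Fin ω → E → F) (f : E → (Fin ω ⊕ E) → F)
    (hf : IsExtKernel F N ω k ks f) (hreg : StronglySupRegular F N f)
    (T : Finset V) (hT : T.Nonempty) (hTs : N.s ∉ T) :
    (ω ≤ N.minCutNodes T → dminT F N f T ≤ N.minCutNodes T - ω + 1) ∧
    (N.minCutNodes T < ω → dminT F N f T ≤ 1) := by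
  classical
  have hset : {n | ∃ C : Finset E, N.IsCutNodes C T ∧ C.card = n}.Nonempty := by
    refine ⟨(Finset.univ : Finset E).card, Finset.univ, ?_, rfl⟩
    intro p hp _
    obtain ⟨e, he⟩ := List.exists_mem_of_ne_nil p hp.1.1
    exact ⟨e, he, Finset.mem_univ e⟩
  obtain ⟨C, hC, hCcard⟩ : ∃ C : Finset E, N.IsCutNodes C T ∧ C.card = N.minCutNodes T :=
    Nat.sInf_mem hset
  have hΦle := phi_le_delta hf hC
  have hdim := hreg T hT hTs
  constructor
  · intro hωle
    obtain ⟨ρ, hρsub, hρcard⟩ :=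
      Finset.exists_subset_card_eq (s := C) (n := N.minCutNodes T - ω + 1) (by omega)
    have hne : DeltaT F N f T ρ ⊓ PhiT F N f T ≠ ⊥ := by
      refine inf_ne_bot_of_card hΦle hρsub ?_
      rw [hdim]; omega
    exact Nat.sInf_le ⟨ρ, hρcard, hne⟩
  · intro hlt
    by_cases h0 : N.minCutNodes T = 0
    · have hΦbot : PhiT F N f T = ⊥ := by
        have : Module.finrank F (PhiT F N f T) = 0 := by rw [hdim]; omega
        exact Submodule.finrank_eq_zero.mp this
      have : dminT F N f T = 0 := by
        unfold dminT
        have : {n | ∃ ρ : Finset E, ρ.card = n ∧ DeltaT F N f T ρ ⊓ PhiT F N f T ≠ ⊥} = ∅ := by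
          ext n
          simp only [Set.mem_setOf_eq, Set.mem_empty_iff_false, iff_false, not_exists]
          rintro ρ ⟨-, hbad⟩
          exact hbad (by rw [hΦbot, inf_bot_eq])
        rw [this, Nat.sInf_empty]
      omega
    · obtain ⟨ρ, hρsub, hρcard⟩ :=
        Finset.exists_subset_card_eq (s := C) (n := 1) (by omega)
      have hne : DeltaT F N f T ρ ⊓ PhiT F N f T ≠ ⊥ := by
        refine inf_ne_bot_of_card hΦle hρsub ?_
        rw [hdim]; omega
      exact Nat.sInf_le ⟨ρ, hρcard, hne⟩
end

section
/- Let G=(V,E) be a single-source acyclic network, ξ⊆E a nonempty collection of channels, and ρ={e_1,…,e_l}⊆E an error pattern with e_j∈In(i_j) for 1≤j≤l. Construct a modified network from G by introducing a new source node s_ρ, adding the l new channels e_j'=(s_ρ, i_j) for 1≤j≤l, and deleting the channels e_1,…,e_l. Then rank_ξ(ρ), the rank of the error pattern ρ with respect to ξ in the original network G, equals the minimum cut capacity between s_ρ and ξ in the modified network. -/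
open scoped BigOperators

section Proof8

open Sum

variable {V E : Type*} [Fintype V] [Fintype E] [DecidableEq V] [DecidableEq E]

/-- channels along a chain are pairwise distinct -/
lemma chain_nodup (N : Network V E) (p : List E)
    (h : p.Chain' fun d e => N.head d = N.tail e) : p.Nodup := by
  have h2 : p.Chain' fun d e => N.rk d < N.rk e :=
    h.imp fun {d e} hde => N.acyclic d e hde
  haveI : IsTrans E fun d e => N.rk d < N.rk e := ⟨fun _ _ _ => lt_trans⟩
  have h3 : p.Pairwise fun d e => N.rk d < N.rk e :=
    (List.isChain_iff_pairwise (R := fun d e => N.rk d < N.rk e)).1 h2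
  exact h3.imp fun {d e} hde => fun hh => by subst hh; exact lt_irrefl _ hde

/-- unique index in a nodup list -/
lemma nth_inj {p : List E} (hnd : p.Nodup) {i j : ℕ} {a : E}
    (hi : p[i]? = some a) (hj : p[j]? = some a) : i = j := by
  have hlen : i < p.length := (List.getElem?_eq_some_iff.1 hi).1
  exact (List.getElem?_inj hlen hnd).1 (hi.trans hj.symm)

/-- characterization of paths from the source in the modified network -/
lemma modNet_pathFrom_iff (N : Network V E) (ρ : Finset E) (p : List E) :
    (modNet N ρ).PathFrom p (modNet N ρ).s ↔
      ∃ e rest, p = e :: rest ∧ e ∈ ρ ∧ (∀ x ∈ rest, x ∉ ρ) ∧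
        p.Chain' (fun d e => N.head d = N.tail e) := by
  have hchain : ∀ q : List E,
      (q.Chain' fun d e => (modNet N ρ).head d = (modNet N ρ).tail e) ↔
      ((∀ x ∈ q.tail, x ∉ ρ) ∧ q.Chain' (fun d e => N.head d = N.tail e)) := by
    intro q
    induction q with
    | nil => simp [List.Chain']
    | cons a t ih =>
      cases t with
      | nil => simp [List.Chain']
      | cons b t' =>
        unfold List.Chain' at ih ⊢
        rw [List.isChain_cons_cons, List.isChain_cons_cons, ih]
        constructor
        · rintro ⟨hab, ht, hc⟩
          have : b ∉ ρ ∧ N.head a = N.tail b := by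
            by_cases hb : b ∈ ρ
            · simp [modNet, hb] at hab
            · simp [modNet, hb] at hab; exact ⟨hb, hab⟩
          refine ⟨?_, this.2, hc⟩
          intro x hx
          rcases List.mem_cons.1 hx with h | h
          · subst h; exact this.1
          · exact ht x h
        · rintro ⟨ht, hab, hc⟩
          have hb : b ∉ ρ := ht b List.mem_cons_self
          exact ⟨by simp [modNet, hb, hab], fun x hx => ht x (List.mem_cons_of_mem _ hx), hc⟩
  constructor
  · rintro ⟨⟨hne, hch⟩, hst⟩
    obtain ⟨e, rest, rfl⟩ := List.exists_cons_of_ne_nil hne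
    have he : e ∈ ρ := by
      have := hst e (by simp)
      by_contra hee
      simp [modNet, hee] at this
    rw [hchain] at hch
    exact ⟨e, rest, rfl, he, fun x hx => hch.1 x (by simpa using hx), hch.2⟩
  · rintro ⟨e, rest, rfl, he, hrest, hch⟩
    refine ⟨⟨by simp, ?_⟩, ?_⟩
    · rw [hchain]; exact ⟨by simpa using hrest, hch⟩
    · intro x hx
      simp only [List.head?_cons, Option.mem_def, Option.some.injEq] at hx
      subst hx
      simp [modNet, he]

end Proof8
section Proof8b

open Sum

variable {V E : Type*} [Fintype V] [Fintype E] [DecidableEq V] [DecidableEq E]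
variable {F : Type*} [Field F] {N : Network V E} {ω : ℕ}
variable {k : E → E → F} {ks : Fin ω → E → F} {f : E → (Fin ω ⊕ E) → F}

lemma extKernel_apply_inr (hf : IsExtKernel F N ω k ks f) (e' x : E) :
    f e' (inr x) = (∑ d : E, if N.head d = N.tail e' then k d e' * f d (inr x) else 0)
      + (if x = e' then 1 else 0) := by
  have h := congrFun (hf e') (inr x)
  simpa [Finset.sum_apply, Pi.single_apply, apply_ite (fun g : (Fin ω ⊕ E) → F => g (inr x))]
    using h

/-- backward recursion for the extended global kernels -/
lemma backrec (hf : IsExtKernel F N ω k ks f) (e' g : E) :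
    f e' (inr g) = (∑ d : E, if N.tail d = N.head g then k g d * f e' (inr d) else 0)
      + (if g = e' then 1 else 0) := by
  suffices H : ∀ n e', N.rk e' < n → ∀ g,
      f e' (inr g) = (∑ d : E, if N.tail d = N.head g then k g d * f e' (inr d) else 0)
        + (if g = e' then 1 else 0) from
    H (N.rk e' + 1) e' (Nat.lt_succ_self _) g
  intro n
  induction n with
  | zero => intro e' h; omega
  | succ n ih =>
    intro e' hlt g
    have hIH : ∀ d' : E, N.head d' = N.tail e' →
        f d' (inr g) = (∑ d : E, if N.tail d = N.head g then k g d * f d' (inr d) else 0)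
          + (if g = d' then 1 else 0) := by
      intro d' hd'
      exact ih d' (by have := N.acyclic d' e' hd'; omega) g
    -- expand the left-hand side
    rw [extKernel_apply_inr hf e' g]
    have hL : (∑ d' : E, if N.head d' = N.tail e' then k d' e' * f d' (inr g) else 0)
        = (∑ d' : E, if N.head d' = N.tail e' then
            k d' e' * ((∑ d : E, if N.tail d = N.head g then k g d * f d' (inr d) else 0)
              + (if g = d' then 1 else 0)) else 0) := by
      refine Finset.sum_congr rfl fun d' _ => ?_
      by_cases h : N.head d' = N.tail e'
      · simp only [h, if_true, hIH d' h]
      · simp [h]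
    rw [hL]
    -- expand each f e' (inr d) on the right-hand side
    have hR : (∑ d : E, if N.tail d = N.head g then k g d * f e' (inr d) else 0)
        = (∑ d : E, if N.tail d = N.head g then
            k g d * ((∑ d' : E, if N.head d' = N.tail e' then k d' e' * f d' (inr d) else 0)
              + (if d = e' then 1 else 0)) else 0) := by
      refine Finset.sum_congr rfl fun d _ => ?_
      by_cases h : N.tail d = N.head g
      · simp only [h, if_true, extKernel_apply_inr hf e' d]
      · simp [h]
    rw [hR]
    -- now both sides are explicit; massage
    have expand1 : ∀ (c : Prop) [Decidable c] (a : F) (s t : F),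
        (if c then a * (s + t) else 0) = (if c then a * s else 0) + (if c then a * t else 0) := by
      intro c _ a s t; split_ifs <;> ring_nf <;> simp [mul_add]
    simp only [expand1, Finset.sum_add_distrib]
    have hdiag1 : (∑ d' : E, if N.head d' = N.tail e' then
        k d' e' * (if g = d' then 1 else 0) else 0)
        = (if N.head g = N.tail e' then k g e' else 0) := by
      rw [Finset.sum_eq_single g]
      · by_cases h : N.head g = N.tail e' <;> simp [h]
      · intro d' _ hne
        by_cases h : N.head d' = N.tail e' <;> simp [h, Ne.symm hne]
      · simp
    have hdiag2 : (∑ d : E, if N.tail d = N.head g then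
        k g d * (if d = e' then 1 else 0) else 0)
        = (if N.tail e' = N.head g then k g e' else 0) := by
      rw [Finset.sum_eq_single e']
      · by_cases h : N.tail e' = N.head g <;> simp [h]
      · intro d _ hne
        by_cases h : N.tail d = N.head g <;> simp [h, hne]
      · simp
    rw [hdiag1, hdiag2]
    have hswap : (∑ d' : E, if N.head d' = N.tail e' then
          k d' e' * (∑ d : E, if N.tail d = N.head g then k g d * f d' (inr d) else 0) else 0)
        = (∑ d : E, if N.tail d = N.head g then
          k g d * (∑ d' : E, if N.head d' = N.tail e' then k d' e' * f d' (inr d) else 0) else 0) := by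
      have lhs_eq : ∀ d' : E, (if N.head d' = N.tail e' then
            k d' e' * (∑ d : E, if N.tail d = N.head g then k g d * f d' (inr d) else 0) else 0)
          = ∑ d : E, (if N.head d' = N.tail e' then
              (if N.tail d = N.head g then k d' e' * (k g d * f d' (inr d)) else 0) else 0) := by
        intro d'
        split_ifs with h
        · rw [Finset.mul_sum]
          refine Finset.sum_congr rfl fun d _ => ?_
          split_ifs <;> ring_nf <;> simp
        · simp
      have rhs_eq : ∀ d : E, (if N.tail d = N.head g then
            k g d * (∑ d' : E, if N.head d' = N.tail e' then k d' e' * f d' (inr d) else 0) else 0)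
          = ∑ d' : E, (if N.head d' = N.tail e' then
              (if N.tail d = N.head g then k d' e' * (k g d * f d' (inr d)) else 0) else 0) := by
        intro d
        split_ifs with h
        · rw [Finset.mul_sum]
          refine Finset.sum_congr rfl fun d' _ => ?_
          split_ifs <;> ring_nf <;> simp [h]
        · refine (Finset.sum_eq_zero fun d' _ => ?_).symm
          split_ifs <;> simp [h]
      simp only [lhs_eq, rhs_eq]
      exact Finset.sum_comm
    rw [hswap]
    rw [if_congr (eq_comm (a := N.head g) (b := N.tail e')) rfl rfl]

end Proof8b
section Proof8c

open Sum

variable {V E : Type*} [Fintype V] [Fintype E] [DecidableEq V] [DecidableEq E]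
variable {F : Type*} [Field F] {N : Network V E} {ω : ℕ}
variable {k : E → E → F} {ks : Fin ω → E → F} {f : E → (Fin ω ⊕ E) → F}

lemma rowX_rec (hf : IsExtKernel F N ω k ks f) {ξ : Finset E} {g : E} (hg : g ∉ ξ) :
    rowX F N f ξ (inr g)
      = ∑ d : E, if N.tail d = N.head g then k g d • rowX F N f ξ (inr d) else 0 := by
  funext e'
  simp only [rowX, Finset.sum_apply, Pi.smul_apply, smul_eq_mul]
  by_cases he' : e' ∈ ξ
  · simp only [he', if_true]
    rw [backrec hf e' g]
    have hge' : g ≠ e' := fun h => hg (h ▸ he')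
    simp only [hge', if_false, add_zero]
    refine Finset.sum_congr rfl fun d _ => ?_
    split_ifs with h
    · simp [rowX, he']
    · simp
  · simp only [he', if_false]
    refine (Finset.sum_eq_zero fun d _ => ?_).symm
    split_ifs with h <;> simp [rowX, he']

lemma rowX_mem_span_of_cut (hf : IsExtKernel F N ω k ks f) (ξ ρ : Finset E) (C : Finset E)
    (hC : (modNet N ρ).IsCutChans C ξ) :
    ∀ g : E,
      (∀ rest : List E, ((g :: rest).Chain' fun d e => N.head d = N.tail e) →
        (∀ x ∈ rest, x ∉ ρ) → (g :: rest).getLast (by simp) ∈ ξ →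
        ∃ c ∈ g :: rest, c ∈ C) →
      rowX F N f ξ (inr g) ∈
        Submodule.span F ((fun e => rowX F N f ξ (inr e)) '' (C : Set E)) := by
  set M := Finset.univ.sup N.rk with hM
  have hMle : ∀ e : E, N.rk e ≤ M := fun e => Finset.le_sup (Finset.mem_univ e)
  suffices H : ∀ n : ℕ, ∀ g : E, M - N.rk g < n →
      (∀ rest : List E, ((g :: rest).Chain' fun d e => N.head d = N.tail e) →
        (∀ x ∈ rest, x ∉ ρ) → (g :: rest).getLast (by simp) ∈ ξ →
        ∃ c ∈ g :: rest, c ∈ C) →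
      rowX F N f ξ (inr g) ∈
        Submodule.span F ((fun e => rowX F N f ξ (inr e)) '' (C : Set E)) by
    intro g hg
    exact H (M - N.rk g + 1) g (Nat.lt_succ_self _) hg
  intro n
  induction n with
  | zero => intro g h; omega
  | succ n ih =>
    intro g hlt hgood
    by_cases hgC : g ∈ C
    · exact Submodule.subset_span ⟨g, hgC, rfl⟩
    · have hgξ : g ∉ ξ := by
        intro hgξ
        obtain ⟨c, hc, hcC⟩ := hgood [] (by simp [List.Chain']) (by simp) (by simpa using hgξ)
        simp only [List.mem_singleton] at hc
        exact hgC (hc ▸ hcC)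
      rw [rowX_rec hf hgξ]
      refine Submodule.sum_mem _ fun d _ => ?_
      split_ifs with hd
      · refine Submodule.smul_mem _ _ ?_
        have hrk : N.rk g < N.rk d := N.acyclic g d hd.symm
        refine ih d (by have := hMle d; omega) ?_
        intro rest hch hrest hlast
        by_cases hdρ : d ∈ ρ
        · -- d :: rest is a path from the new source in the modified network
          have hpath : (modNet N ρ).PathFrom (d :: rest) (modNet N ρ).s :=
            (modNet_pathFrom_iff N ρ (d :: rest)).2 ⟨d, rest, rfl, hdρ, hrest, hch⟩
          refine hC (d :: rest) hpath ?_
          rw [List.getLast?_eq_getLast (l := d :: rest) (by simp)]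
          exact ⟨_, rfl, hlast⟩
        · -- extend with g in front and use goodness of g
          have hch' : ((g :: d :: rest).Chain' fun d e => N.head d = N.tail e) :=
            List.isChain_cons_cons.2 ⟨hd.symm, hch⟩
          have hrest' : ∀ x ∈ d :: rest, x ∉ ρ := by
            intro x hx
            rcases List.mem_cons.1 hx with h | h
            · exact h ▸ hdρ
            · exact hrest x h
          have hlast' : (g :: d :: rest).getLast (by simp) ∈ ξ := by
            rwa [List.getLast_cons (by simp)]
          obtain ⟨c, hc, hcC⟩ := hgood (d :: rest) hch' hrest' hlast'
          rcases List.mem_cons.1 hc with h | h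
          · exact absurd (h ▸ hcC) hgC
          · exact ⟨c, h, hcC⟩
      · exact Submodule.zero_mem _

/-- any cut of the modified network dominates ρ -/
lemma dominates_of_cut (N : Network V E) (ω : ℕ) (ξ ρ : Finset E) (C : Finset E)
    (F : Type*) [Field F]
    (hC : (modNet N ρ).IsCutChans C ξ) : DominatesX F N ω ξ ρ C := by
  intro k ks f hf
  rw [DeltaX, DeltaX, Submodule.span_le]
  rintro v ⟨e, he, rfl⟩
  refine rowX_mem_span_of_cut hf ξ ρ C hC e ?_
  intro rest hch hrest hlast
  have hpath : (modNet N ρ).PathFrom (e :: rest) (modNet N ρ).s :=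
    (modNet_pathFrom_iff N ρ (e :: rest)).2 ⟨e, rest, rfl, he, hrest, hch⟩
  refine hC (e :: rest) hpath ?_
  rw [List.getLast?_eq_getLast (l := e :: rest) (by simp)]
  exact ⟨_, rfl, hlast⟩

end Proof8c
section Proof8d

open Sum

variable {V E : Type*} [Fintype V] [Fintype E] [DecidableEq V] [DecidableEq E]
variable (F : Type*) [Field F]

/-- `d` and `e` occur consecutively in `p` -/
def ConsecIn (p : List E) (d e : E) : Prop :=
  ∃ i : ℕ, p[i]? = some d ∧ p[i + 1]? = some e

/-- `d` occurs in `p` at or before an occurrence of `e'` -/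
def BeforeIn (p : List E) (d e' : E) : Prop :=
  ∃ i j : ℕ, i ≤ j ∧ p[i]? = some d ∧ p[j]? = some e'

open Classical in
/-- routing local encoding coefficients along the path `p` -/
noncomputable def kP (p : List E) (d e : E) : F :=
  if ConsecIn p d e then 1 else 0

open Classical in
/-- the extended global encoding kernels of the routing code along `p` -/
noncomputable def fP (p : List E) (e' : E) : (Fin ω ⊕ E) → F :=
  Sum.elim (fun _ => 0) (fun d => if d = e' ∨ BeforeIn p d e' then 1 else 0)

variable {N : Network V E} {ω : ℕ}

lemma isExtKernel_fP (p : List E) (hch : p.Chain' fun d e => N.head d = N.tail e)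
    (hnd : p.Nodup) :
    IsExtKernel F N ω (kP F p) (fun _ _ => 0) (fP F p (ω := ω)) := by
  classical
  intro e'
  funext x
  cases x with
  | inl i =>
    simp [fP, kP, Finset.sum_apply, Pi.single_apply,
      apply_ite (fun g : (Fin ω ⊕ E) → F => g (inl i))]
  | inr x =>
    have hRHS : ((∑ d : E, if N.head d = N.tail e' then kP F p d e' • fP F p (ω := ω) d else 0)
        + (∑ i : Fin ω, (if N.tail e' = N.s then (0:F) else 0) • (Pi.single (inl i) 1 : (Fin ω ⊕ E) → F))
        + (Pi.single (inr e') 1 : (Fin ω ⊕ E) → F)) (inr x)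
        = (∑ d : E, if N.head d = N.tail e' then kP F p d e' * fP F p (ω := ω) d (inr x) else 0)
          + (if x = e' then 1 else 0) := by
      simp [Finset.sum_apply, Pi.single_apply,
        apply_ite (fun g : (Fin ω ⊕ E) → F => g (inr x))]
    rw [hRHS]
    by_cases he' : ∃ j : ℕ, p[j]? = some e'
    · obtain ⟨j, hj⟩ := he'
      match j, hj with
      | 0, hj =>
        -- e' is the first channel of p : no incoming routing coefficient
        have hsum : (∑ d : E, if N.head d = N.tail e'
            then kP F p d e' * fP F p (ω := ω) d (inr x) else 0) = 0 := by
          refine Finset.sum_eq_zero fun d _ => ?_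
          split_ifs with h
          · have hk : kP F p d e' = 0 := by
              rw [kP, if_neg]
              rintro ⟨i, -, hie⟩
              exact Nat.succ_ne_zero i (nth_inj hnd hie hj)
            rw [hk, zero_mul]
          · rfl
        rw [hsum, zero_add, fP]
        simp only [Sum.elim_inr]
        congr 1
        have : (x = e' ∨ BeforeIn p x e') ↔ x = e' := by
          constructor
          · rintro (h | ⟨i, j', hij, hix, hje⟩)
            · exact h
            · have : j' = 0 := nth_inj hnd hje hj
              subst this
              have : i = 0 := Nat.le_zero.1 hij
              subst this
              rw [hix] at hj
              exact Option.some.inj hj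
          · exact Or.inl
        simp [this]
      | (jj + 1), hj =>
        have hjlen : jj + 1 < p.length := (List.getElem?_eq_some_iff.1 hj).1
        have hjjlen : jj < p.length := by omega
        set dprev := p[jj] with hdprevdef
        have hdprev : p[jj]? = some dprev := List.getElem?_eq_some_iff.2 ⟨hjjlen, rfl⟩
        have hadj : N.head dprev = N.tail e' := by
          have := List.isChain_iff_getElem.1 hch jj (by omega)
          have he'eq : p[jj+1] = e' := by
            have := (List.getElem?_eq_some_iff.1 hj).2
            exact this
          rw [← he'eq]
          exact this
        have hsum : (∑ d : E, if N.head d = N.tail e'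
            then kP F p d e' * fP F p (ω := ω) d (inr x) else 0)
            = fP F p (ω := ω) dprev (inr x) := by
          rw [Finset.sum_eq_single dprev]
          · have hk : kP F p dprev e' = 1 := by
              rw [kP, if_pos]; exact ⟨jj, hdprev, hj⟩
            rw [if_pos hadj, hk, one_mul]
          · intro d _ hne
            split_ifs with h
            · have hk : kP F p d e' = 0 := by
                rw [kP, if_neg]
                rintro ⟨i, hid, hie⟩
                have : i + 1 = jj + 1 := nth_inj hnd hie hj
                have : i = jj := by omega
                subst this
                rw [hid] at hdprev
                exact hne (Option.some.inj hdprev)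
              rw [hk, zero_mul]
            · rfl
          · simp
        rw [hsum]
        simp only [fP, Sum.elim_inr]
        by_cases hxe : x = e'
        · subst hxe
          rw [if_pos (Or.inl rfl), if_pos rfl]
          rw [if_neg, zero_add]
          rintro (h | ⟨i, j', hij, hix, hjd⟩)
          · -- x = dprev : impossible since x = e' occurs at jj+1 and dprev at jj
            subst h
            have := nth_inj hnd hj hdprev
            omega
          · have hi : i = jj + 1 := nth_inj hnd hix hj
            have hj' : j' = jj := nth_inj hnd hjd hdprev
            omega
        · rw [if_neg hxe, add_zero]
          congr 1
          have : (x = e' ∨ BeforeIn p x e') ↔ (x = dprev ∨ BeforeIn p x dprev) := by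
            constructor
            · rintro (h | ⟨i, j', hij, hix, hje⟩)
              · exact absurd h hxe
              · have hj'eq : j' = jj + 1 := nth_inj hnd hje hj
                have hine : i ≠ jj + 1 := by
                  intro h
                  rw [h] at hix
                  rw [hix] at hj
                  exact hxe (Option.some.inj hj)
                exact Or.inr ⟨i, jj, by omega, hix, hdprev⟩
            · rintro (h | ⟨i, j', hij, hix, hjd⟩)
              · subst h
                exact Or.inr ⟨jj, jj + 1, by omega, hdprev, hj⟩
              · have hj'eq : j' = jj := nth_inj hnd hjd hdprev
                exact Or.inr ⟨i, jj + 1, by omega, hix, hj⟩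
          simp [this]
    · -- e' does not occur on p
      push_neg at he'
      have hsum : (∑ d : E, if N.head d = N.tail e'
          then kP F p d e' * fP F p (ω := ω) d (inr x) else 0) = 0 := by
        refine Finset.sum_eq_zero fun d _ => ?_
        split_ifs with h
        · have hk : kP F p d e' = 0 := by
            rw [kP, if_neg]
            rintro ⟨i, -, hie⟩
            exact he' (i + 1) hie
          rw [hk, zero_mul]
        · rfl
      rw [hsum, zero_add, fP]
      simp only [Sum.elim_inr]
      congr 1
      have : (x = e' ∨ BeforeIn p x e') ↔ x = e' := by
        constructor
        · rintro (h | ⟨i, j', hij, hix, hje⟩)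
          · exact h
          · exact absurd hje (he' j')
        · exact Or.inl
      simp [this]

end Proof8d
section Proof8e

open Sum

variable {V E : Type*} [Fintype V] [Fintype E] [DecidableEq V] [DecidableEq E]

/-- any dominator of ρ is a cut of the modified network -/
lemma isCut_of_dominates (F : Type*) [Field F] (N : Network V E) (ω : ℕ)
    (ξ ρ ρ' : Finset E) (hd : DominatesX F N ω ξ ρ ρ') :
    (modNet N ρ).IsCutChans ρ' ξ := by
  intro p hpath hlast
  by_contra hcc
  push_neg at hcc
  obtain ⟨e, rest, hp, he, hrest, hch⟩ := (modNet_pathFrom_iff N ρ p).1 hpath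
  have hnd : p.Nodup := chain_nodup N p hch
  have hext : IsExtKernel F N ω (kP F p) (fun _ _ => 0) (fP F p (ω := ω)) :=
    isExtKernel_fP F p hch hnd
  have hle : DeltaX F N (fP F p (ω := ω)) ξ ρ ≤ DeltaX F N (fP F p (ω := ω)) ξ ρ' :=
    hd (kP F p) (fun _ _ => 0) (fP F p (ω := ω)) hext
  obtain ⟨c, hc, hcξ⟩ := hlast
  have hclast : p[p.length - 1]? = some c := by
    rw [List.getLast?_eq_getElem?] at hc
    exact hc
  have hcp : c ∈ p := List.mem_of_getElem? hclast
  have h0 : p[0]? = some e := by simp [hp]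
  have hmem : rowX F N (fP F p (ω := ω)) ξ (inr e) ∈ DeltaX F N (fP F p (ω := ω)) ξ ρ :=
    Submodule.subset_span ⟨e, he, rfl⟩
  have hmem' := hle hmem
  -- every element of Δ(ξ, ρ') vanishes at coordinate c
  have hvanish : ∀ v ∈ DeltaX F N (fP F p (ω := ω)) ξ ρ', v c = 0 := by
    have : DeltaX F N (fP F p (ω := ω)) ξ ρ' ≤
        LinearMap.ker (LinearMap.proj (R := F) (φ := fun _ : E => F) c) := by
      rw [DeltaX, Submodule.span_le]
      rintro v ⟨g, hg, rfl⟩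
      have hgp : g ∉ p := fun hgp => hcc g hgp hg
      simp only [SetLike.mem_coe, LinearMap.mem_ker, LinearMap.proj_apply]
      show rowX F N (fP F p (ω := ω)) ξ (inr g) c = 0
      rw [rowX, if_pos hcξ, fP]
      simp only [Sum.elim_inr]
      rw [if_neg]
      rintro (h | ⟨i, j, hij, hig, hjc⟩)
      · exact hgp (h ▸ hcp)
      · exact hgp (List.mem_of_getElem? hig)
    intro v hv
    simpa using this hv
  have h1 : rowX F N (fP F p (ω := ω)) ξ (inr e) c = 1 := by
    rw [rowX, if_pos hcξ, fP]
    simp only [Sum.elim_inr]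
    rw [if_pos]
    exact Or.inr ⟨0, p.length - 1, Nat.zero_le _, h0, hclast⟩
  rw [hvanish _ hmem'] at h1
  exact one_ne_zero h1.symm

end Proof8e


/-- The rank `rank_ξ(ρ)` of an error pattern `ρ` with respect to a
nonempty collection `ξ` of channels equals the minimum cut capacity between the new
source `s_ρ` and `ξ` in the modified network. -/
theorem statement8 {V E : Type*} [Fintype V] [Fintype E] [DecidableEq V] [DecidableEq E]
    (F : Type*) [Field F] [Fintype F] (N : Network V E) (ω : ℕ) (hω : 1 ≤ ω)
    (ξ : Finset E) (hξ : ξ.Nonempty) (ρ : Finset E) :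
    rankX F N ω ξ ρ = (modNet N ρ).minCutChans ξ := by
  
  classical
  rw [rankX, Network.minCutChans]
  have hcutne : Set.Nonempty {n | ∃ C : Finset E, (modNet N ρ).IsCutChans C ξ ∧ C.card = n} :=
    ⟨Finset.univ.card, Finset.univ,
      fun p hp _ => ⟨p.head hp.1.1, List.head_mem _, Finset.mem_univ _⟩, rfl⟩
  obtain ⟨C, hC, hCcard⟩ := Nat.sInf_mem hcutne
  have hmem : sInf {n | ∃ C : Finset E, (modNet N ρ).IsCutChans C ξ ∧ C.card = n} ∈
      {n | ∃ ρ' : Finset E, DominatesX F N ω ξ ρ ρ' ∧ ρ'.card = n} :=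
    ⟨C, dominates_of_cut N ω ξ ρ C F hC, hCcard⟩
  refine le_antisymm (Nat.sInf_le hmem) ?_
  obtain ⟨ρ', hρ', hcard⟩ := Nat.sInf_mem (⟨_, hmem⟩ :
    Set.Nonempty {n | ∃ ρ' : Finset E, DominatesX F N ω ξ ρ ρ' ∧ ρ'.card = n})
  rw [← hcard]
  exact Nat.sInf_le ⟨ρ', isCut_of_dominates F N ω ξ ρ ρ' hρ', rfl⟩
end

section
/- (Strongly Extended Singleton Bound) For any channel-regular ω-dimensional linear network error correction code on a single-source acyclic network G=(V,E) and any nonempty collection ξ⊆E of channels, the minimum distance at ξ satisfies d_min^{(ξ)}(G) ≤ δ_ξ+1 if C_ξ ≥ ω, and d_min^{(ξ)}(G) ≤ 1 if C_ξ < ω. -/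
open scoped BigOperators

section SingletonProof

variable {V E : Type*} [Fintype V] [Fintype E] [DecidableEq V] [DecidableEq E]
variable {F : Type*} [Field F] {ω : ℕ}

/-- Vectors vanishing on a set of coordinates. -/
def zeroOn (F : Type*) [Field F] {ι : Type*} (s : Set ι) : Submodule F (ι → F) where
  carrier := {z | ∀ i ∈ s, z i = 0}
  add_mem' := fun ha hb i hi => by simp [ha i hi, hb i hi]
  zero_mem' := fun i _ => rfl
  smul_mem' := fun c a ha i hi => by simp [ha i hi]

lemma mem_zeroOn {ι : Type*} {s : Set ι} {z : ι → F} :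
    z ∈ zeroOn F s ↔ ∀ i ∈ s, z i = 0 := Iff.rfl

lemma tri_aux (N : Network V E) (k : E → E → F) (ks : Fin ω → E → F)
    (f : E → (Fin ω ⊕ E) → F) (hf : IsExtKernel F N ω k ks f) :
    ∀ n (e e' : E), N.rk e < n → N.rk e ≤ N.rk e' →
      f e (Sum.inr e') = if e = e' then 1 else 0 := by
  intro n
  induction n with
  | zero => intro e e' h _; omega
  | succ n ih =>
    intro e e' hn hle
    have h := congrFun (hf e) (Sum.inr e')
    simp only [Pi.add_apply, Finset.sum_apply] at h
    have h1 : ∀ d ∈ (Finset.univ : Finset E),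
        (if N.head d = N.tail e then k d e • f d else 0) (Sum.inr e') = 0 := by
      intro d _
      split_ifs with hd
      · have hlt := N.acyclic d e hd
        have hz : f d (Sum.inr e') = 0 := by
          rw [ih d e' (by omega) (le_trans (le_of_lt hlt) hle)]
          rw [if_neg]
          intro hde; subst hde; omega
        simp [hz]
      · rfl
    rw [Finset.sum_eq_zero h1] at h
    have h2 : ∀ i ∈ (Finset.univ : Finset (Fin ω)),
        ((if N.tail e = N.s then ks i e else 0) •
          (Pi.single (Sum.inl i) 1 : (Fin ω ⊕ E) → F)) (Sum.inr e') = 0 := by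
      intro i _
      simp [Pi.single_apply]
    rw [Finset.sum_eq_zero h2] at h
    rw [h, Pi.single_apply]
    by_cases hee : e = e'
    · subst hee; simp
    · rw [if_neg (by simp [Ne.symm hee]), if_neg hee]; simp

lemma pathFrom_concat (N : Network V E) {p : List E} {d e : E}
    (hp : N.PathFrom p N.s) (hlast : p.getLast? = some d) (hde : N.head d = N.tail e) :
    N.PathFrom (p ++ [e]) N.s := by
  obtain ⟨⟨hne, hch⟩, hhd⟩ := hp
  obtain ⟨a, t, rfl⟩ := List.exists_cons_of_ne_nil hne
  refine ⟨⟨by simp, ?_⟩, ?_⟩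
  · show List.IsChain _ _
    rw [List.isChain_append]
    refine ⟨hch, List.isChain_singleton _, ?_⟩
    intro x hx y hy
    simp only [List.head?_cons, Option.mem_some_iff] at hy
    rw [hlast] at hx
    simp only [Option.mem_some_iff] at hx
    subst hx; subst hy
    exact hde
  · intro x hx
    simp only [List.cons_append, List.head?_cons, Option.mem_some_iff] at hx
    subst hx
    exact hhd a (by simp)

lemma cov_aux (N : Network V E) (k : E → E → F) (ks : Fin ω → E → F)
    (f : E → (Fin ω ⊕ E) → F) (hf : IsExtKernel F N ω k ks f) (D : Finset E) :
    ∀ n (e : E), N.rk e < n →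
      (∀ p, N.PathFrom p N.s → p.getLast? = some e → ∃ c ∈ p, c ∈ D) →
      f e ∈ Submodule.span F (f '' ↑D) ⊔
        zeroOn F {x : Fin ω ⊕ E | (∃ i, x = Sum.inl i) ∨ ∃ c ∈ D, x = Sum.inr c} := by
  intro n
  induction n with
  | zero => intro e h _; omega
  | succ n ih =>
    intro e hn hcov
    by_cases heD : e ∈ D
    · exact Submodule.mem_sup_left (Submodule.subset_span ⟨e, heD, rfl⟩)
    · have hts : N.tail e ≠ N.s := by
        intro hts
        obtain ⟨c, hcp, hcD⟩ := hcov [e] ⟨⟨by simp, List.isChain_singleton e⟩, by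
          intro x hx; simp only [List.head?_cons, Option.mem_some_iff] at hx
          subst hx; exact hts⟩ (by simp)
        simp only [List.mem_singleton] at hcp
        subst hcp; exact heD hcD
      rw [hf e]
      refine add_mem (add_mem ?_ ?_) ?_
      · refine Submodule.sum_mem _ fun d _ => ?_
        split_ifs with hd
        · refine Submodule.smul_mem _ _ (ih d ?_ ?_)
          · have := N.acyclic d e hd; omega
          · intro p hp hlast
            obtain ⟨c, hcp, hcD⟩ := hcov (p ++ [e]) (pathFrom_concat N hp hlast hd)
              (List.getLast?_concat)
            rcases List.mem_append.mp hcp with h | h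
            · exact ⟨c, h, hcD⟩
            · simp only [List.mem_singleton] at h
              subst h; exact absurd hcD heD
        · exact zero_mem _
      · have hz : (∑ i : Fin ω, (if N.tail e = N.s then ks i e else 0) •
            (Pi.single (Sum.inl i) 1 : (Fin ω ⊕ E) → F)) = 0 :=
          Finset.sum_eq_zero fun i _ => by rw [if_neg hts, zero_smul]
        rw [hz]; exact zero_mem _
      · refine Submodule.mem_sup_right ?_
        rw [mem_zeroOn]
        rintro x (⟨i, rfl⟩ | ⟨c, hcD, rfl⟩)
        · simp [Pi.single_apply]
        · rw [Pi.single_apply, if_neg]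
          simp only [Sum.inr.injEq]
          rintro rfl; exact heD hcD

lemma phi_le_deltaX (N : Network V E) (k : E → E → F) (ks : Fin ω → E → F)
    (f : E → (Fin ω ⊕ E) → F) (hf : IsExtKernel F N ω k ks f)
    (ξ D : Finset E) (hD : N.IsCutChans D ξ) :
    PhiX F N f ξ ≤ DeltaX F N f ξ D := by
  classical
  set Sset : Set (Fin ω ⊕ E) :=
    {x | (∃ i, x = Sum.inl i) ∨ ∃ c ∈ D, x = Sum.inr c} with hS
  have hdec : ∀ e ∈ ξ, ∃ a : E → F, ∃ z : (Fin ω ⊕ E) → F,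
      f e = (∑ c ∈ D, a c • f c) + z ∧ z ∈ zeroOn F Sset := by
    intro e heξ
    have hm := cov_aux N k ks f hf D (N.rk e + 1) e (lt_add_one _)
      (fun p hp hlast => hD p hp ⟨e, by simp [hlast], heξ⟩)
    rw [Submodule.mem_sup] at hm
    obtain ⟨y, hy, z, hz, hyz⟩ := hm
    rw [Finsupp.mem_span_image_iff_linearCombination] at hy
    obtain ⟨l, hl, hly⟩ := hy
    refine ⟨l, z, ?_, hz⟩
    rw [← hyz, ← hly]
    congr 1
    exact Finsupp.linearCombination_apply_of_mem_supported F hl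
  choose! a z hfz hzmem using hdec
  set w : E → E → F := fun c => fun e' => if e' ∈ ξ then a e' c else 0 with hw
  have hrow : ∀ d ∈ Sset, rowX F N f ξ d = ∑ c ∈ D, f c d • w c := by
    intro d hd
    funext e'
    simp only [rowX, Finset.sum_apply, Pi.smul_apply, hw, smul_eq_mul]
    by_cases hξ' : e' ∈ ξ
    · rw [if_pos hξ']
      have h1 := congrFun (hfz e' hξ') d
      simp only [Pi.add_apply, Finset.sum_apply, Pi.smul_apply, smul_eq_mul] at h1
      rw [h1, (mem_zeroOn.mp (hzmem e' hξ')) d hd, add_zero]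
      exact Finset.sum_congr rfl fun c _ => by rw [if_pos hξ', mul_comm]
    · rw [if_neg hξ']
      exact (Finset.sum_eq_zero fun c _ => by rw [if_neg hξ', mul_zero]).symm
  have htri : ∀ (c e' : E), N.rk c ≤ N.rk e' → f c (Sum.inr e') = if c = e' then 1 else 0 :=
    fun c e' h => tri_aux N k ks f hf (N.rk c + 1) c e' (lt_add_one _) h
  have hwmem : ∀ m, ∀ c₀ ∈ D, (D.filter fun c => N.rk c₀ < N.rk c).card < m →
      w c₀ ∈ DeltaX F N f ξ D := by
    intro m
    induction m with
    | zero => intro c₀ _ h; omega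
    | succ m ih =>
      intro c₀ hc₀ hcard
      have hr := hrow (Sum.inr c₀) (Or.inr ⟨c₀, hc₀, rfl⟩)
      have hsplit : (∑ c ∈ D, f c (Sum.inr c₀) • w c)
          = (∑ c ∈ D.filter (fun c => N.rk c₀ < N.rk c), f c (Sum.inr c₀) • w c) + w c₀ := by
        rw [← Finset.sum_filter_add_sum_filter_not D (fun c => N.rk c₀ < N.rk c)
          (fun c => f c (Sum.inr c₀) • w c)]
        congr 1
        rw [Finset.sum_eq_single_of_mem c₀
          (Finset.mem_filter.mpr ⟨hc₀, by omega⟩)]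
        · rw [htri c₀ c₀ le_rfl, if_pos rfl, one_smul]
        · intro c hc hne
          rw [htri c c₀ (by have := (Finset.mem_filter.mp hc).2; omega), if_neg hne, zero_smul]
      have heq : w c₀ = rowX F N f ξ (Sum.inr c₀)
          - ∑ c ∈ D.filter (fun c => N.rk c₀ < N.rk c), f c (Sum.inr c₀) • w c := by
        rw [hr, hsplit]; abel
      rw [heq]
      refine sub_mem (Submodule.subset_span ⟨c₀, hc₀, rfl⟩)
        (Submodule.sum_mem _ fun c hc => ?_)
      have hcD : c ∈ D := (Finset.mem_filter.mp hc).1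
      have hcrk : N.rk c₀ < N.rk c := (Finset.mem_filter.mp hc).2
      refine Submodule.smul_mem _ _ (ih c hcD ?_)
      have h1 : (D.filter fun c' => N.rk c < N.rk c') ⊆ D.filter fun c' => N.rk c₀ < N.rk c' := by
        intro x hx
        simp only [Finset.mem_filter] at hx ⊢
        exact ⟨hx.1, by omega⟩
      have h2 : c ∉ D.filter fun c' => N.rk c < N.rk c' := by
        simp only [Finset.mem_filter]; omega
      have h3 := Finset.card_lt_card ((Finset.ssubset_iff_of_subset h1).mpr ⟨c, hc, h2⟩)
      omega
  rw [PhiX, Submodule.span_le]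
  rintro _ ⟨i, rfl⟩
  rw [SetLike.mem_coe]
  show rowX F N f ξ (Sum.inl i) ∈ DeltaX F N f ξ D
  rw [hrow (Sum.inl i) (Or.inl ⟨i, rfl⟩)]
  exact Submodule.sum_mem _ fun c hc => Submodule.smul_mem _ _
    (hwmem ((D.filter fun c' => N.rk c < N.rk c').card + 1) c hc (lt_add_one _))

lemma finrank_deltaX_le (N : Network V E) (f : E → (Fin ω ⊕ E) → F) (ξ ρ : Finset E) :
    Module.finrank F (DeltaX F N f ξ ρ) ≤ ρ.card := by
  classical
  rw [DeltaX, ← Finset.coe_image]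
  exact le_trans (finrank_span_finset_le_card _) Finset.card_image_le

lemma deltaX_mono (N : Network V E) (f : E → (Fin ω ⊕ E) → F) (ξ : Finset E)
    {ρ₁ ρ₂ : Finset E} (h : ρ₁ ⊆ ρ₂) :
    DeltaX F N f ξ ρ₁ ≤ DeltaX F N f ξ ρ₂ :=
  Submodule.span_mono (Set.image_mono h)

end SingletonProof

/-- **Strongly Extended Singleton Bound.** For any channel-regular
`ω`-dimensional LNEC code and any nonempty collection `ξ ⊆ E` of channels,
`d_min^{(ξ)} ≤ δ_ξ + 1` if `C_ξ ≥ ω`, and `d_min^{(ξ)} ≤ 1` if `C_ξ < ω`. -/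
theorem statement9 {V E : Type*} [Fintype V] [Fintype E] [DecidableEq V] [DecidableEq E]
    (F : Type*) [Field F] [Fintype F] (N : Network V E) (ω : ℕ) (hω : 1 ≤ ω)
    (k : E → E → F) (ks : Fin ω → E → F) (f : E → (Fin ω ⊕ E) → F)
    (hf : IsExtKernel F N ω k ks f) (hreg : ChannelRegular F N f)
    (ξ : Finset E) (hξ : ξ.Nonempty) :
    (ω ≤ N.minCutChans ξ → dminX F N f ξ ≤ N.minCutChans ξ - ω + 1) ∧
    (N.minCutChans ξ < ω → dminX F N f ξ ≤ 1) := by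
  classical
  have hne : {n | ∃ C : Finset E, N.IsCutChans C ξ ∧ C.card = n}.Nonempty := by
    refine ⟨ξ.card, ξ, ?_, rfl⟩
    intro p _ hlast
    obtain ⟨e, he, heξ⟩ := hlast
    exact ⟨e, List.mem_of_mem_getLast? he, heξ⟩
  obtain ⟨D, hD, hDcard⟩ := Nat.sInf_mem hne
  have hDcard' : D.card = N.minCutChans ξ := hDcard
  have hPhiD := phi_le_deltaX N k ks f hf ξ D hD
  have hPhirank := hreg ξ hξ
  have hsup_le : ∀ (p q : Submodule F (E → F)),
      Module.finrank F ↥(p ⊔ q) ≤ Module.finrank F p + Module.finrank F q := by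
    intro p q
    have := Submodule.finrank_sup_add_finrank_inf_eq p q
    omega
  constructor
  · intro hωC
    have hrΦ : Module.finrank F (PhiX F N f ξ) = ω := by
      rw [hPhirank, min_eq_left hωC]
    obtain ⟨ρ, hρD, hρcard⟩ := Finset.exists_subset_card_eq
      (show N.minCutChans ξ - ω + 1 ≤ D.card by omega)
    refine Nat.sInf_le ⟨ρ, hρcard, ?_⟩
    intro hbot
    have h1 : Module.finrank F ↥(DeltaX F N f ξ ρ ⊔ PhiX F N f ξ) =
        Module.finrank F (DeltaX F N f ξ ρ) + ω := by
      have h := Submodule.finrank_sup_add_finrank_inf_eq (DeltaX F N f ξ ρ) (PhiX F N f ξ)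
      rw [hbot] at h
      simp only [finrank_bot, add_zero] at h
      rw [h, hrΦ]
    have h2 : DeltaX F N f ξ ρ ⊔ PhiX F N f ξ ≤ DeltaX F N f ξ D :=
      sup_le (deltaX_mono N f ξ hρD) hPhiD
    have h3 : DeltaX F N f ξ D ≤ DeltaX F N f ξ ρ ⊔ DeltaX F N f ξ (D \ ρ) := by
      rw [DeltaX, DeltaX, DeltaX, ← Submodule.span_union, ← Set.image_union]
      refine Submodule.span_mono (Set.image_mono ?_)
      intro x hx
      simp only [Finset.coe_union, Finset.coe_sdiff, Set.mem_union, Set.mem_diff] at *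
      by_cases hxρ : x ∈ ρ
      · exact Or.inl hxρ
      · exact Or.inr ⟨hx, hxρ⟩
    have h4 := Submodule.finrank_mono h2
    have h5 := Submodule.finrank_mono h3
    have h6 := hsup_le (DeltaX F N f ξ ρ) (DeltaX F N f ξ (D \ ρ))
    have h7 := finrank_deltaX_le N f ξ (D \ ρ)
    have h8 : (D \ ρ).card = D.card - ρ.card := Finset.card_sdiff_of_subset hρD
    rw [h1] at h4
    omega
  · intro hC
    by_cases hC0 : N.minCutChans ξ = 0
    · have hDempty : D = ∅ := Finset.card_eq_zero.mp (by omega)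
      have hΔbot : DeltaX F N f ξ D = ⊥ := by
        rw [hDempty, DeltaX]
        simp
      have hΦbot : PhiX F N f ξ = ⊥ := le_bot_iff.mp (hΔbot ▸ hPhiD)
      have hempty : {n | ∃ ρ : Finset E, ρ.card = n ∧ DeltaX F N f ξ ρ ⊓ PhiX F N f ξ ≠ ⊥} = ∅ := by
        ext n
        simp only [Set.mem_setOf_eq, Set.mem_empty_iff_false, iff_false, not_exists]
        rintro ρ ⟨_, hne'⟩
        exact hne' (le_bot_iff.mp (le_trans inf_le_right hΦbot.le))
      show sInf _ ≤ 1
      rw [hempty, Nat.sInf_empty]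
      omega
    · have hrΦ : Module.finrank F (PhiX F N f ξ) = N.minCutChans ξ := by
        rw [hPhirank, min_eq_right hC.le]
      have hΦeq : PhiX F N f ξ = DeltaX F N f ξ D := by
        refine Submodule.eq_of_le_of_finrank_le hPhiD ?_
        rw [hrΦ]
        exact le_trans (finrank_deltaX_le N f ξ D) (le_of_eq hDcard')
      have hex : ∃ c ∈ D, rowX F N f ξ (Sum.inr c) ≠ 0 := by
        by_contra hall
        push_neg at hall
        have hΔbot : DeltaX F N f ξ D = ⊥ := by
          rw [DeltaX, Submodule.span_eq_bot]
          rintro x ⟨c, hcD, rfl⟩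
          exact hall c hcD
        rw [hΔbot] at hΦeq
        rw [hΦeq, finrank_bot] at hrΦ
        omega
      obtain ⟨c, hcD, hc0⟩ := hex
      refine Nat.sInf_le ⟨{c}, Finset.card_singleton c, ?_⟩
      intro hb
      apply hc0
      have hmem : rowX F N f ξ (Sum.inr c) ∈ DeltaX F N f ξ ({c} : Finset E) ⊓ PhiX F N f ξ := by
        refine Submodule.mem_inf.mpr ⟨?_, ?_⟩
        · exact Submodule.subset_span ⟨c, by simp, rfl⟩
        · rw [hΦeq]
          exact Submodule.subset_span ⟨c, hcD, rfl⟩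
      rw [hb] at hmem
      exact hmem
end
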